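/- arXiv:0807.1826 — 8 statements merged into one kernel-verified Lean document; each statement's English description precedes it below -/
import Mathlib

section
/- If k has characteristic ≠ 2 and B = k[x]/(x²+γ), then a pair (f, δ) with f an algebra endomorphism of A and δ a left f-derivation defines a twisting map B ⊗ A → A ⊗ B if and only if δ² = γ(f² − id_A) and fδ + δf = 0. -/
set_option maxHeartbeats 1000000

open TensorProduct Polynomial

/-- `B = k[x]/(x² + γ)`. -/
noncomputable abbrev Bg (k : Type*) [Field k] (γ : k) :=
  AdjoinRoot (X ^ 2 + C γ : k[X])

section aux
variable {k : Type*} [Field k] (γ : k)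

lemma pg_monic : (X ^ 2 + C γ : k[X]).Monic := monic_X_pow_add_C γ two_ne_zero

lemma pg_dim : (AdjoinRoot.powerBasis' (pg_monic γ)).dim = 2 := by
  show (X ^ 2 + C γ : k[X]).natDegree = 2
  exact natDegree_X_pow_add_C

noncomputable def bgBasis : Module.Basis (Fin 2) k (Bg k γ) :=
  ((AdjoinRoot.powerBasis' (pg_monic γ)).basis).reindex (finCongr (pg_dim γ))

lemma bgBasis_zero : bgBasis γ 0 = 1 := by
  simp only [bgBasis, Module.Basis.reindex_apply, PowerBasis.basis_eq_pow]
  norm_num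

lemma bgBasis_one : bgBasis γ 1 = AdjoinRoot.root (X ^ 2 + C γ) := by
  simp only [bgBasis, Module.Basis.reindex_apply, PowerBasis.basis_eq_pow,
    AdjoinRoot.powerBasis'_gen]
  norm_num

lemma root_sq : AdjoinRoot.root (X ^ 2 + C γ : k[X]) * AdjoinRoot.root (X ^ 2 + C γ) =
    algebraMap k (Bg k γ) (-γ) := by
  have h := AdjoinRoot.eval₂_root (X ^ 2 + C γ : k[X])
  simp only [eval₂_add, eval₂_pow, eval₂_mul, eval₂_X, eval₂_C] at h
  rw [map_neg, AdjoinRoot.algebraMap_eq]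
  linear_combination (h : _)

end aux

section tau
variable {k A : Type*} [Field k] [Ring A] [Algebra k A] (γ : k)
  (f : A →ₐ[k] A) (δ : A →ₗ[k] A)

/-- extensionality for linear maps out of Bg -/
lemma Bg_ext {P : Type*} [AddCommMonoid P] [Module k P] {L1 L2 : Bg k γ →ₗ[k] P}
    (h1 : L1 1 = L2 1) (hx : L1 (AdjoinRoot.root (X ^ 2 + C γ)) =
      L2 (AdjoinRoot.root (X ^ 2 + C γ))) : L1 = L2 := by
  apply (bgBasis γ).ext
  intro i
  fin_cases i
  · simpa only [Fin.mk_zero, Fin.mk_one, bgBasis_zero] using h1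
  · simpa only [Fin.mk_zero, Fin.mk_one, bgBasis_one] using hx

/-- a ↦ a ⊗ b₀ -/
noncomputable def tmulRight (b₀ : Bg k γ) : A →ₗ[k] A ⊗[k] Bg k γ :=
  (TensorProduct.mk k A (Bg k γ)).flip b₀

@[simp] lemma tmulRight_apply (b₀ : Bg k γ) (a : A) : tmulRight γ b₀ a = a ⊗ₜ b₀ := rfl

noncomputable def tauMap : Bg k γ ⊗[k] A →ₗ[k] A ⊗[k] Bg k γ :=
  TensorProduct.lift ((bgBasis γ).constr k
    ![tmulRight γ 1,
      (tmulRight γ 1).comp δ + (tmulRight γ (AdjoinRoot.root (X ^ 2 + C γ))).comp f.toLinearMap])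

@[simp] lemma tauMap_one (a : A) : tauMap γ f δ ((1 : Bg k γ) ⊗ₜ a) = a ⊗ₜ 1 := by
  rw [tauMap, ← bgBasis_zero γ, TensorProduct.lift.tmul, Module.Basis.constr_basis]
  rfl

@[simp] lemma tauMap_root (a : A) :
    tauMap γ f δ (AdjoinRoot.root (X ^ 2 + C γ) ⊗ₜ a) =
      δ a ⊗ₜ (1 : Bg k γ) + f a ⊗ₜ AdjoinRoot.root (X ^ 2 + C γ) := by
  rw [tauMap, ← bgBasis_one γ, TensorProduct.lift.tmul, Module.Basis.constr_basis]
  rfl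

end tau

/-- If `char k ≠ 2` and `B = k[x]/(x² + γ)`, then a pair `(f, δ)`, with `f` an algebra
endomorphism of `A` and `δ` a left `f`-derivation, defines a (unital) twisting map
`B ⊗ A → A ⊗ B` via `τ(x ⊗ a) = δ(a) ⊗ 1 + f(a) ⊗ x` if, and only if,
`δ² = γ(f² − id)` and `fδ + δf = 0`. -/
theorem stmt1 {k A : Type*} [Field k] [Ring A] [Algebra k A] (h2 : (2 : k) ≠ 0) (γ : k)
    (f : A →ₐ[k] A) (δ : A →ₗ[k] A)
    (hδ : ∀ a b : A, δ (a * b) = δ a * b + f a * δ b) :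
    (∃ τ : Bg k γ ⊗[k] A →ₗ[k] A ⊗[k] Bg k γ,
      (∀ a : A,
        τ (AdjoinRoot.root (X ^ 2 + C γ) ⊗ₜ a) =
          δ a ⊗ₜ (1 : Bg k γ) + f a ⊗ₜ AdjoinRoot.root (X ^ 2 + C γ)) ∧
      -- hexagon condition for the multiplication of A
      (τ ∘ₗ LinearMap.lTensor (Bg k γ) (LinearMap.mul' k A) =
        LinearMap.rTensor (Bg k γ) (LinearMap.mul' k A) ∘ₗ
          (TensorProduct.assoc k A A (Bg k γ)).symm.toLinearMap ∘ₗ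
          LinearMap.lTensor A τ ∘ₗ
          (TensorProduct.assoc k A (Bg k γ) A).toLinearMap ∘ₗ
          LinearMap.rTensor A τ ∘ₗ
          (TensorProduct.assoc k (Bg k γ) A A).symm.toLinearMap) ∧
      -- hexagon condition for the multiplication of B
      (τ ∘ₗ LinearMap.rTensor A (LinearMap.mul' k (Bg k γ)) =
        LinearMap.lTensor A (LinearMap.mul' k (Bg k γ)) ∘ₗ
          (TensorProduct.assoc k A (Bg k γ) (Bg k γ)).toLinearMap ∘ₗ
          LinearMap.rTensor (Bg k γ) τ ∘ₗ
          (TensorProduct.assoc k (Bg k γ) A (Bg k γ)).symm.toLinearMap ∘ₗ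
          LinearMap.lTensor (Bg k γ) τ ∘ₗ
          (TensorProduct.assoc k (Bg k γ) (Bg k γ) A).toLinearMap) ∧
      -- unitality
      (∀ a : A, τ ((1 : Bg k γ) ⊗ₜ a) = a ⊗ₜ (1 : Bg k γ)) ∧
      (∀ b : Bg k γ, τ (b ⊗ₜ (1 : A)) = (1 : A) ⊗ₜ b)) ↔
    ((∀ a : A, δ (δ a) = γ • (f (f a) - a)) ∧ (∀ a : A, f (δ a) + δ (f a) = 0)) := by
  have hδ1 : δ (1 : A) = 0 := by
    have := hδ 1 1
    simp only [mul_one, map_one, one_mul] at this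
    exact (left_eq_add.mp this)
  constructor
  · rintro ⟨τ, hroot, hhexA, hhexB, hone, hunit⟩
    have key : ∀ a : A, (-γ : k) • (a ⊗ₜ[k] (1 : Bg k γ)) =
        δ (δ a) ⊗ₜ[k] (1 : Bg k γ) +
          f (δ a) ⊗ₜ[k] AdjoinRoot.root (X ^ 2 + C γ) +
          (δ (f a) ⊗ₜ[k] AdjoinRoot.root (X ^ 2 + C γ) +
            (-γ : k) • (f (f a) ⊗ₜ[k] (1 : Bg k γ))) := by
      intro a
      have h := LinearMap.congr_fun hhexB
        ((AdjoinRoot.root (X ^ 2 + C γ) ⊗ₜ AdjoinRoot.root (X ^ 2 + C γ)) ⊗ₜ a)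
      simp only [LinearMap.coe_comp, Function.comp_apply, LinearMap.lTensor_tmul,
        LinearMap.rTensor_tmul, LinearEquiv.coe_coe, TensorProduct.assoc_tmul,
        TensorProduct.assoc_symm_tmul, LinearMap.mul'_apply, hroot, hone,
        TensorProduct.tmul_add, TensorProduct.add_tmul, map_add, one_mul, mul_one] at h
      rw [root_sq γ, Algebra.algebraMap_eq_smul_one,
        show ((-γ • (1 : Bg k γ)) ⊗ₜ[k] a : Bg k γ ⊗[k] A) = -γ • ((1 : Bg k γ) ⊗ₜ a) from
          (TensorProduct.smul_tmul' _ _ _).symm,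
        map_smul, hone a, TensorProduct.tmul_smul] at h
      exact h
    have coordc : ∀ (i : Fin 2) (c : A) (b : Bg k γ),
        ((TensorProduct.rid k A).toLinearMap ∘ₗ LinearMap.lTensor A ((bgBasis γ).coord i))
          (c ⊗ₜ b) = ((bgBasis γ).coord i b) • c := by
      intro i c b
      simp [TensorProduct.rid_tmul]
    have c00 : (bgBasis γ).coord 0 (1 : Bg k γ) = 1 := by
      rw [← bgBasis_zero γ]; simp [Module.Basis.coord_apply, Module.Basis.repr_self]
    have c01 : (bgBasis γ).coord 1 (1 : Bg k γ) = 0 := by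
      rw [← bgBasis_zero γ]; simp [Module.Basis.coord_apply, Module.Basis.repr_self]
    have c10 : (bgBasis γ).coord 0 (AdjoinRoot.root (X ^ 2 + C γ)) = 0 := by
      rw [← bgBasis_one γ]; simp [Module.Basis.coord_apply, Module.Basis.repr_self]
    have c11 : (bgBasis γ).coord 1 (AdjoinRoot.root (X ^ 2 + C γ)) = 1 := by
      rw [← bgBasis_one γ]; simp [Module.Basis.coord_apply, Module.Basis.repr_self]
    constructor
    · intro a
      have h := congrArg ((TensorProduct.rid k A).toLinearMap ∘ₗ
        LinearMap.lTensor A ((bgBasis γ).coord 0)) (key a)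
      simp only [map_add, map_smul, coordc, c00, c10, one_smul, zero_smul,
        smul_zero, add_zero, zero_add] at h
      have h' : δ (δ a) = -γ • a - (-γ : k) • f (f a) := by
        rw [h]; abel
      rw [h']; module
    · intro a
      have h := congrArg ((TensorProduct.rid k A).toLinearMap ∘ₗ
        LinearMap.lTensor A ((bgBasis γ).coord 1)) (key a)
      simp only [map_add, map_smul, coordc, c01, c11, one_smul, zero_smul,
        smul_zero, add_zero, zero_add] at h
      exact h.symm
  · rintro ⟨h1, hodd⟩
    refine ⟨tauMap γ f δ, tauMap_root γ f δ, ?_, ?_, tauMap_one γ f δ, ?_⟩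
    · -- hexagon A
      apply TensorProduct.ext
      apply Bg_ext γ
      · apply TensorProduct.ext'
        intro a b
        simp [TensorProduct.assoc_tmul, TensorProduct.assoc_symm_tmul,
          LinearMap.mul'_apply]
      · apply TensorProduct.ext'
        intro a b
        simp only [LinearMap.compr₂_apply, LinearMap.compr₂ₛₗ_apply, TensorProduct.mk_apply, LinearMap.coe_comp,
          Function.comp_apply, LinearMap.lTensor_tmul, LinearMap.rTensor_tmul,
          LinearEquiv.coe_coe, TensorProduct.assoc_tmul, TensorProduct.assoc_symm_tmul,
          LinearMap.mul'_apply, tauMap_one, tauMap_root, TensorProduct.tmul_add,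
          TensorProduct.add_tmul, map_add]
        rw [hδ a b, map_mul, add_tmul, add_assoc]
    · -- hexagon B
      apply TensorProduct.ext
      apply TensorProduct.ext
      apply Bg_ext γ
      · apply Bg_ext γ <;>
        · apply LinearMap.ext
          intro a
          simp only [LinearMap.compr₂_apply, LinearMap.compr₂ₛₗ_apply, TensorProduct.mk_apply, LinearMap.coe_comp,
            Function.comp_apply, LinearMap.lTensor_tmul, LinearMap.rTensor_tmul,
            LinearEquiv.coe_coe, TensorProduct.assoc_tmul, TensorProduct.assoc_symm_tmul,
            LinearMap.mul'_apply, tauMap_one, tauMap_root, TensorProduct.tmul_add,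
            TensorProduct.add_tmul, map_add, one_mul, mul_one]
      · apply Bg_ext γ
        · apply LinearMap.ext
          intro a
          simp only [LinearMap.compr₂_apply, LinearMap.compr₂ₛₗ_apply, TensorProduct.mk_apply, LinearMap.coe_comp,
            Function.comp_apply, LinearMap.lTensor_tmul, LinearMap.rTensor_tmul,
            LinearEquiv.coe_coe, TensorProduct.assoc_tmul, TensorProduct.assoc_symm_tmul,
            LinearMap.mul'_apply, tauMap_one, tauMap_root, TensorProduct.tmul_add,
            TensorProduct.add_tmul, map_add, one_mul, mul_one]
        · apply LinearMap.ext
          intro a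
          simp only [LinearMap.compr₂_apply, LinearMap.compr₂ₛₗ_apply, TensorProduct.mk_apply, LinearMap.coe_comp,
            Function.comp_apply, LinearMap.lTensor_tmul, LinearMap.rTensor_tmul,
            LinearEquiv.coe_coe, TensorProduct.assoc_tmul, TensorProduct.assoc_symm_tmul,
            LinearMap.mul'_apply, tauMap_one, tauMap_root, TensorProduct.tmul_add,
            TensorProduct.add_tmul, map_add]
          rw [root_sq γ, Algebra.algebraMap_eq_smul_one]
          rw [show ((-γ • (1 : Bg k γ)) ⊗ₜ[k] a : Bg k γ ⊗[k] A) = -γ • ((1 : Bg k γ) ⊗ₜ a) from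
            (TensorProduct.smul_tmul' _ _ _).symm]
          rw [map_smul, tauMap_one, TensorProduct.tmul_smul, h1 a]
          simp only [one_mul, mul_one]
          have hd : δ (f a) = -(f (δ a)) := eq_neg_of_add_eq_zero_right (hodd a)
          rw [smul_sub, TensorProduct.sub_tmul, hd, TensorProduct.neg_tmul]
          simp only [← TensorProduct.smul_tmul']
          match_scalars <;> ring
    · intro b
      have hmaps : (tauMap γ f δ) ∘ₗ (TensorProduct.mk k (Bg k γ) A).flip 1 =
          (TensorProduct.mk k A (Bg k γ)) 1 := by
        apply Bg_ext γ
        · simp only [LinearMap.coe_comp, Function.comp_apply, LinearMap.flip_apply,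
            TensorProduct.mk_apply, tauMap_one]
        · simp only [LinearMap.coe_comp, Function.comp_apply, LinearMap.flip_apply,
            TensorProduct.mk_apply, tauMap_root, hδ1, TensorProduct.zero_tmul, map_one,
            zero_add]
      exact LinearMap.congr_fun hmaps b
end

section
/- Let A ⊗_{(f,δ)} B be a quantum duplicate of A, with B = k[x]/(p(x)) and twisting map given by the pair (f, δ). An algebra endomorphism φ of A lifts to an algebra endomorphism φ̃ of A ⊗_{(f,δ)} B defined by φ̃(a ⊗ b) = φ(a) ⊗ b if and only if fφ = φf and δφ = φδ. -/
/-- Let `A ⊗_{(f,δ)} B` be a quantum duplicate of `A`, with `B = k[x]/(x² − αx + β)` and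
twisting map given by the pair `(f, δ)` — presented here as a `k`-algebra `X` containing `A`
via `ι` and an element `x` with `x² = αx − β`, `x·ι(a) = ι(f a)·x + ι(δ a)`, in which every
element is uniquely of the form `ι(a) + ι(b)·x`.  An algebra endomorphism `φ` of `A` lifts to
an algebra endomorphism `Φ` of `X` with `Φ(ι(a) + ι(b)x) = ι(φ a) + ι(φ b)x` if, and only if,
`fφ = φf` and `δφ = φδ`. -/
theorem stmt4 {k A X : Type*} [Field k] [Ring A] [Algebra k A] [Ring X] [Algebra k X]
    (α β : k) (f : A →ₐ[k] A) (δ : A →ₗ[k] A)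
    (hδ : ∀ a b : A, δ (a * b) = δ a * b + f a * δ b)
    (hc1 : ∀ a : A, δ (δ a) - α • δ a + β • a = β • f (f a))
    (hc2 : ∀ a : A, f (δ a) + δ (f a) = α • (f a - f (f a)))
    (ι : A →ₐ[k] X) (x : X)
    (hx : x * x = α • x - β • (1 : X))
    (hrel : ∀ a : A, x * ι a = ι (f a) * x + ι (δ a))
    (hbasis : ∀ w : X, ∃! c : A × A, w = ι c.1 + ι c.2 * x)
    (φ : A →ₐ[k] A) :
    (∃ Φ : X →ₐ[k] X, ∀ a b : A, Φ (ι a + ι b * x) = ι (φ a) + ι (φ b) * x) ↔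
      ((∀ a : A, f (φ a) = φ (f a)) ∧ (∀ a : A, δ (φ a) = φ (δ a))) := by
  have uniq : ∀ a b a' b' : A, ι a + ι b * x = ι a' + ι b' * x → a = a' ∧ b = b' := by
    intro a b a' b' h
    obtain ⟨c, -, hu⟩ := hbasis (ι a' + ι b' * x)
    have h1 := hu (a, b) h.symm
    have h2 := hu (a', b') rfl
    have h3 : (a, b) = (a', b') := h1.trans h2.symm
    exact ⟨congrArg Prod.fst h3, congrArg Prod.snd h3⟩
  constructor
  · rintro ⟨Φ, hΦ⟩
    have hΦι : ∀ a : A, Φ (ι a) = ι (φ a) := by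
      intro a; have := hΦ a 0; simpa using this
    have hΦx : Φ x = x := by
      have := hΦ 0 1; simpa using this
    have key : ∀ a : A, ι (δ (φ a)) + ι (f (φ a)) * x = ι (φ (δ a)) + ι (φ (f a)) * x := by
      intro a
      have h1 : Φ (x * ι a) = ι (f (φ a)) * x + ι (δ (φ a)) := by
        rw [map_mul, hΦx, hΦι, hrel]
      have h2 : Φ (x * ι a) = ι (φ (f a)) * x + ι (φ (δ a)) := by
        rw [hrel, map_add, map_mul, hΦι, hΦι, hΦx]
      rw [h1, add_comm (ι (f (φ a)) * x), add_comm (ι (φ (f a)) * x)] at h2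
      exact h2
    exact ⟨fun a => (uniq _ _ _ _ (key a)).2, fun a => (uniq _ _ _ _ (key a)).1⟩
  · rintro ⟨hf, hd⟩
    -- multiplication formula
    have mulE : ∀ a b c d : A, (ι a + ι b * x) * (ι c + ι d * x) =
        ι (a * c + b * δ c - β • (b * f d)) +
          ι (a * d + b * f c + b * δ d + α • (b * f d)) * x := by
      intro a b c d
      have h1 : x * ι c = ι (f c) * x + ι (δ c) := hrel c
      have h2 : x * ι d = ι (f d) * x + ι (δ d) := hrel d
      simp only [map_add, map_sub, map_mul, map_smul, add_mul, mul_add, sub_mul]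
      rw [mul_assoc (ι b) x (ι c), h1, mul_assoc (ι b) x (ι d * x), ← mul_assoc x (ι d) x, h2,
        add_mul, mul_assoc (ι (f d)) x x, hx]
      simp only [mul_add, mul_sub, mul_smul_comm, smul_mul_assoc, mul_one, mul_assoc]
      abel
    -- coordinates
    let c : X → A × A := fun w => (hbasis w).choose
    have hc : ∀ w : X, w = ι (c w).1 + ι (c w).2 * x :=
      fun w => (hbasis w).choose_spec.1
    have hcu : ∀ (w : X) (p : A × A), w = ι p.1 + ι p.2 * x → c w = p :=
      fun w p h => ((hbasis w).choose_spec.2 p h).symm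
    let Φ0 : X → X := fun w => ι (φ (c w).1) + ι (φ (c w).2) * x
    have hΦ0 : ∀ a b : A, Φ0 (ι a + ι b * x) = ι (φ a) + ι (φ b) * x := by
      intro a b
      have h := hcu (ι a + ι b * x) (a, b) rfl
      simp only [Φ0, h]
    have hmul : ∀ w v : X, Φ0 (w * v) = Φ0 w * Φ0 v := by
      intro w v
      have hw := hc w; have hv := hc v
      have hprod : w * v = ι ((c w).1 * (c v).1 + (c w).2 * δ (c v).1 - β • ((c w).2 * f (c v).2)) +
          ι ((c w).1 * (c v).2 + (c w).2 * f (c v).1 + (c w).2 * δ (c v).2 + α • ((c w).2 * f (c v).2)) * x := by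
        conv_lhs => rw [hw, hv]
        exact mulE _ _ _ _
      rw [hprod, hΦ0]
      have hrhs : Φ0 w * Φ0 v =
          ι (φ (c w).1 * φ (c v).1 + φ (c w).2 * δ (φ (c v).1) - β • (φ (c w).2 * f (φ (c v).2))) +
          ι (φ (c w).1 * φ (c v).2 + φ (c w).2 * f (φ (c v).1) + φ (c w).2 * δ (φ (c v).2) + α • (φ (c w).2 * f (φ (c v).2))) * x := mulE _ _ _ _
      rw [hrhs]
      simp only [map_add, map_sub, map_mul, map_smul, hf, hd]
    have hadd : ∀ w v : X, Φ0 (w + v) = Φ0 w + Φ0 v := by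
      intro w v
      have hsum : w + v = ι ((c w).1 + (c v).1) + ι ((c w).2 + (c v).2) * x := by
        conv_lhs => rw [hc w, hc v]
        simp only [map_add, add_mul]; abel
      rw [hsum, hΦ0]
      simp only [Φ0, map_add, add_mul]; abel
    have hone : Φ0 1 = 1 := by
      have h1 : (1 : X) = ι (1 : A) + ι (0 : A) * x := by simp
      rw [h1, hΦ0]; simp
    have hcomm : ∀ r : k, Φ0 (algebraMap k X r) = algebraMap k X r := by
      intro r
      have h1 : algebraMap k X r = ι (algebraMap k A r) + ι (0 : A) * x := by
        simp [ι.commutes]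
      rw [h1, hΦ0]; simp [φ.commutes]
    have hzero : Φ0 0 = 0 := by
      have h1 : (0 : X) = ι (0 : A) + ι (0 : A) * x := by simp
      rw [h1, hΦ0]; simp
    refine ⟨⟨⟨⟨⟨Φ0, hone⟩, hmul⟩, hzero, hadd⟩, hcomm⟩, hΦ0⟩
end

section
/- For the round-trip quiver colored by (a, b) with a + b = −α, if q(a) ≠ 0 and q(b) ≠ 0 (where q(x) = x² + αx + β), then the twisted tensor product k² ⊗_{(f,δ)} k[x]/(x²−αx+β) is isomorphic as a k-algebra to M₂(k), the algebra of 2×2 matrices over k. -/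
/-- For the round-trip quiver colored by `(a, b)` with `a + b = −α`: if `q(a) ≠ 0` and
`q(b) ≠ 0` (where `q(x) = x² + αx + β`), then the twisted tensor product
`k² ⊗_{(f,δ)} k[x]/(x² − αx + β)` — presented here as a `k`-algebra `X` with orthogonal
idempotents `e₁, e₂` summing to `1`, an element `x` with `x² = αx − β`, the twisted
commutation relations coming from `(f, δ)`, and basis `{e₁, e₂, e₁x, e₂x}` — is isomorphic
to the matrix algebra `M₂(k)`. -/
theorem stmt6 {k : Type*} [Field k] (α β a b : k) (hab : a + b = -α)
    (hqa : a ^ 2 + α * a + β ≠ 0) (hqb : b ^ 2 + α * b + β ≠ 0)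
    (X : Type*) [Ring X] [Algebra k X] (e₁ e₂ x : X)
    (h12 : e₁ * e₂ = 0) (h21 : e₂ * e₁ = 0) (h11 : e₁ * e₁ = e₁) (h22 : e₂ * e₂ = e₂)
    (hsum : e₁ + e₂ = 1)
    (hxx : x * x = α • x - β • (1 : X))
    (hxe₁ : x * e₁ = -(a • e₁) + b • e₂ + e₂ * x)
    (hxe₂ : x * e₂ = a • e₁ - b • e₂ + e₁ * x)
    (hbasis : ∀ w : X, ∃! c : k × k × k × k,
      w = c.1 • e₁ + c.2.1 • e₂ + c.2.2.1 • (e₁ * x) + c.2.2.2 • (e₂ * x)) :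
    Nonempty (X ≃ₐ[k] Matrix (Fin 2) (Fin 2) k) := by
  -- the scalar c = a*b - β is nonzero
  set c : k := a * b - β with hc_def
  have hb : b = -α - a := by linear_combination hab
  have hc : c ≠ 0 := by
    intro h
    apply hqa
    have : a * b = β := by linear_combination h
    rw [hb] at this
    linear_combination -this
  -- key elements
  set u : X := a • e₁ + e₁ * x with hu_def
  set v : X := b • e₂ + e₂ * x with hv_def
  -- auxiliary products
  have he₁xe₂ : e₁ * (x * e₂) = u := by
    rw [hxe₂]; simp only [mul_add, mul_sub, mul_smul_comm, h12, h11, ← mul_assoc]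
    simp [hu_def]
  have he₂xe₁ : e₂ * (x * e₁) = v := by
    rw [hxe₁]; simp only [mul_add, mul_neg, mul_smul_comm, h21, h22, ← mul_assoc]
    simp [hv_def]
  have he₁xe₁ : e₁ * (x * e₁) = -(a • e₁) := by
    rw [hxe₁]; simp only [mul_add, mul_neg, mul_smul_comm, h12, h11, ← mul_assoc]
    simp [h12]
  have he₂xe₂ : e₂ * (x * e₂) = -(b • e₂) := by
    rw [hxe₂]; simp only [mul_add, mul_sub, mul_smul_comm, h21, h22, ← mul_assoc]
    simp [h21]
  have hue₁ : u * e₁ = 0 := by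
    rw [hu_def, add_mul, smul_mul_assoc, h11, mul_assoc, he₁xe₁]; abel
  have hue₂ : u * e₂ = u := by
    rw [hu_def, add_mul, smul_mul_assoc, h12, mul_assoc, he₁xe₂]; simp [hu_def]
  have he₁u : e₁ * u = u := by
    rw [hu_def, mul_add, mul_smul_comm, h11, ← mul_assoc, h11]
  have he₂u : e₂ * u = 0 := by
    rw [hu_def, mul_add, mul_smul_comm, h21, ← mul_assoc, h21]; simp
  have hve₂ : v * e₂ = 0 := by
    rw [hv_def, add_mul, smul_mul_assoc, h22, mul_assoc, he₂xe₂]; abel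
  have hve₁ : v * e₁ = v := by
    rw [hv_def, add_mul, smul_mul_assoc, h21, mul_assoc, he₂xe₁]; simp [hv_def]
  have he₂v : e₂ * v = v := by
    rw [hv_def, mul_add, mul_smul_comm, h22, ← mul_assoc, h22]
  have he₁v : e₁ * v = 0 := by
    rw [hv_def, mul_add, mul_smul_comm, h12, ← mul_assoc, h12]; simp
  have huu : u * u = 0 := by
    nth_rewrite 2 [← he₁u]
    rw [← mul_assoc, hue₁, zero_mul]
  have hvv : v * v = 0 := by
    nth_rewrite 2 [← he₂v]
    rw [← mul_assoc, hve₂, zero_mul]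
  -- u * v = c • e₁
  have m32 : e₁ * x * e₂ = a • e₁ + e₁ * x := by rw [mul_assoc]; exact he₁xe₂
  have m41 : e₂ * x * e₁ = b • e₂ + e₂ * x := by rw [mul_assoc]; exact he₂xe₁
  have m14 : e₁ * (e₂ * x) = 0 := by rw [← mul_assoc, h12, zero_mul]
  have m23 : e₂ * (e₁ * x) = 0 := by rw [← mul_assoc, h21, zero_mul]
  have m34 : e₁ * x * (e₂ * x) = (a + α) • (e₁ * x) - β • e₁ := by
    rw [← mul_assoc, m32, add_mul, smul_mul_assoc, mul_assoc, hxx, mul_sub,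
      mul_smul_comm, mul_smul_comm, mul_one]
    module
  have m43 : e₂ * x * (e₁ * x) = (b + α) • (e₂ * x) - β • e₂ := by
    rw [← mul_assoc, m41, add_mul, smul_mul_assoc, mul_assoc, hxx, mul_sub,
      mul_smul_comm, mul_smul_comm, mul_one]
    module
  have huv : u * v = c • e₁ := by
    rw [hu_def, hv_def, hc_def]
    simp only [add_mul, mul_add, smul_mul_assoc, mul_smul_comm, h12, m14, m32, m34,
      smul_zero, zero_mul, mul_zero, add_zero, zero_add]
    match_scalars <;> first | ring1 | linear_combination hab
  have hvu : v * u = c • e₂ := by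
    rw [hu_def, hv_def, hc_def]
    simp only [add_mul, mul_add, smul_mul_assoc, mul_smul_comm, h21, m23, m41, m43,
      smul_zero, zero_mul, mul_zero, add_zero, zero_add]
    match_scalars <;> first | ring1 | linear_combination hab
  -- matrix units
  set w : X := c⁻¹ • v with hw_def
  have huw : u * w = e₁ := by rw [hw_def, mul_smul_comm, huv, smul_smul, inv_mul_cancel₀ hc, one_smul]
  have hwu : w * u = e₂ := by rw [hw_def, smul_mul_assoc, hvu, smul_smul, inv_mul_cancel₀ hc, one_smul]
  have hww : w * w = 0 := by rw [hw_def, smul_mul_assoc, mul_smul_comm, hvv]; simp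
  have hwe₁ : w * e₁ = w := by rw [hw_def, smul_mul_assoc, hve₁]
  have hwe₂ : w * e₂ = 0 := by rw [hw_def, smul_mul_assoc, hve₂]; simp
  have he₁w : e₁ * w = 0 := by rw [hw_def, mul_smul_comm, he₁v]; simp
  have he₂w : e₂ * w = w := by rw [hw_def, mul_smul_comm, he₂v]
  -- the algebra hom
  let F : Matrix (Fin 2) (Fin 2) k → X := fun M =>
    M 0 0 • e₁ + M 0 1 • u + M 1 0 • w + M 1 1 • e₂
  have hFmul : ∀ M N, F (M * N) = F M * F N := by
    intro M N
    show (M * N) 0 0 • e₁ + (M * N) 0 1 • u + (M * N) 1 0 • w + (M * N) 1 1 • e₂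
      = (M 0 0 • e₁ + M 0 1 • u + M 1 0 • w + M 1 1 • e₂) *
        (N 0 0 • e₁ + N 0 1 • u + N 1 0 • w + N 1 1 • e₂)
    simp only [Matrix.mul_apply, Fin.sum_univ_two]
    simp only [mul_add, add_mul, smul_mul_assoc, mul_smul_comm, h11, h12, h21, h22,
      hue₁, hue₂, he₁u, he₂u, hwe₁, hwe₂, he₁w, he₂w, huu, hww, huw, hwu,
      smul_zero, smul_smul]
    module
  have hF1 : F 1 = 1 := by
    show (1 : Matrix (Fin 2) (Fin 2) k) 0 0 • e₁ + (1 : Matrix (Fin 2) (Fin 2) k) 0 1 • u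
      + (1 : Matrix (Fin 2) (Fin 2) k) 1 0 • w + (1 : Matrix (Fin 2) (Fin 2) k) 1 1 • e₂ = 1
    simp [Matrix.one_apply, hsum]
  have hFadd : ∀ M N, F (M + N) = F M + F N := by
    intro M N
    show ((M + N) 0 0) • e₁ + ((M + N) 0 1) • u + ((M + N) 1 0) • w + ((M + N) 1 1) • e₂ = _
    simp only [Matrix.add_apply, add_smul, F]
    abel
  have hFsmul : ∀ (r : k) (M : Matrix (Fin 2) (Fin 2) k), F (r • M) = r • F M := by
    intro r M
    show ((r • M) 0 0) • e₁ + ((r • M) 0 1) • u + ((r • M) 1 0) • w + ((r • M) 1 1) • e₂ = _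
    simp only [Matrix.smul_apply, smul_eq_mul, mul_smul, F]
    module
  let φ : Matrix (Fin 2) (Fin 2) k →ₐ[k] X :=
    AlgHom.mk' { toFun := F, map_one' := hF1, map_mul' := hFmul,
                 map_zero' := by show F 0 = 0; simp [F],
                 map_add' := hFadd } hFsmul
  have hφ : ∀ M, φ M = M 0 0 • e₁ + M 0 1 • u + M 1 0 • w + M 1 1 • e₂ := fun _ => rfl
  -- nondegeneracy helper: unique coordinates of 0 are 0
  have hzero : ∀ t : k × k × k × k,
      (0 : X) = t.1 • e₁ + t.2.1 • e₂ + t.2.2.1 • (e₁ * x) + t.2.2.2 • (e₂ * x) → t = 0 := by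
    intro t ht
    obtain ⟨c0, _, huniq⟩ := hbasis 0
    have h1 := huniq t ht
    have h2 := huniq 0 (by simp)
    rw [h1, ← h2]
  -- injectivity
  have hinj : Function.Injective φ := by
    rw [injective_iff_map_eq_zero]
    intro M hM
    rw [hφ] at hM
    have hexp : (0 : X) = (M 0 0 + M 0 1 * a) • e₁ + (M 1 1 + M 1 0 * (c⁻¹ * b)) • e₂
        + (M 0 1) • (e₁ * x) + (M 1 0 * c⁻¹) • (e₂ * x) := by
      rw [← hM, hu_def, hw_def, hv_def]
      module
    have := hzero ⟨M 0 0 + M 0 1 * a, M 1 1 + M 1 0 * (c⁻¹ * b), M 0 1, M 1 0 * c⁻¹⟩ hexp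
    simp only [Prod.ext_iff, Prod.fst, Prod.snd] at this
    obtain ⟨h1, h2, h3, h4⟩ := this
    have hM01 : M 0 1 = 0 := h3
    have hM10 : M 1 0 = 0 := by
      have := mul_eq_zero.mp h4
      rcases this with h | h
      · exact h
      · exact absurd (inv_eq_zero.mp h) hc
    have hM00 : M 0 0 = 0 := by rw [hM01] at h1; simpa using h1
    have hM11 : M 1 1 = 0 := by rw [hM10] at h2; simpa using h2
    ext i j
    fin_cases i <;> fin_cases j <;> simpa [hM00, hM01, hM10, hM11]
  -- surjectivity
  have hsurj : Function.Surjective φ := by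
    intro y
    obtain ⟨⟨c1, c2, c3, c4⟩, hy, _⟩ := hbasis y
    refine ⟨Matrix.of ![![c1 - c3 * a, c3], ![c * c4, c2 - c4 * b]], ?_⟩
    rw [hφ]
    simp only [Matrix.of_apply, Matrix.cons_val', Matrix.cons_val_zero, Matrix.cons_val_one,
      Matrix.head_cons, Matrix.empty_val', Matrix.cons_val_fin_one, Matrix.head_fin_const]
    rw [hy, hu_def, hw_def, hv_def]
    rw [smul_smul, show c * c4 * c⁻¹ = c4 by field_simp]
    module
  exact ⟨(AlgEquiv.ofBijective φ ⟨hinj, hsurj⟩).symm⟩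
end

section
/- For any q ∈ k, define A_q = k⟨x, y⟩/(x², y², yx − q·xy). Define X_t = k⟨x, y⟩/(x², y², yx + xy − t). Then for every t ≠ 0, the algebra X_t is isomorphic to the matrix algebra M₂(k). -/
open FreeAlgebra

/-- Relations for `A_q = k⟨x,y⟩/(x², y², yx − q·xy)`. -/
inductive ARel (k : Type*) [Field k] (q : k) :
    FreeAlgebra k (Fin 2) → FreeAlgebra k (Fin 2) → Prop
  | xx : ARel k q (ι k 0 * ι k 0) 0
  | yy : ARel k q (ι k 1 * ι k 1) 0
  | yx : ARel k q (ι k 1 * ι k 0) (algebraMap k _ q * (ι k 0 * ι k 1))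

/-- Relations for `X_t = k⟨x,y⟩/(x², y², yx + xy − t)`. -/
inductive XRel (k : Type*) [Field k] (t : k) :
    FreeAlgebra k (Fin 2) → FreeAlgebra k (Fin 2) → Prop
  | xx : XRel k t (ι k 0 * ι k 0) 0
  | yy : XRel k t (ι k 1 * ι k 1) 0
  | mix : XRel k t (ι k 1 * ι k 0 + ι k 0 * ι k 1) (algebraMap k _ t)

section Aux

variable {k : Type*} [Field k] (t : k)

private lemma one_mat_eq : (1 : Matrix (Fin 2) (Fin 2) k) =
    Matrix.single 0 0 1 + Matrix.single 1 1 1 := by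
  ext i j
  fin_cases i <;> fin_cases j <;>
    simp [Matrix.one_apply, Matrix.single]

private noncomputable def liftF : FreeAlgebra k (Fin 2) →ₐ[k] Matrix (Fin 2) (Fin 2) k :=
  FreeAlgebra.lift k ![Matrix.single 0 1 1, t • Matrix.single 1 0 1]

private lemma liftF_rel : ∀ ⦃x y⦄, XRel k t x y → liftF t x = liftF t y := by
  intro x y h
  cases h with
  | xx =>
      simp [liftF, Matrix.single_mul_single_of_ne]
  | yy =>
      simp [liftF, Matrix.smul_mul, Matrix.mul_smul,
        Matrix.single_mul_single_of_ne]
  | mix =>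
      simp only [liftF, map_add, map_mul, lift_ι_apply, Matrix.cons_val_one,
        Matrix.head_cons, Matrix.cons_val_zero, AlgHom.commutes]
      rw [Algebra.algebraMap_eq_smul_one, one_mat_eq]
      simp only [Matrix.smul_mul, Matrix.mul_smul, smul_add,
        Matrix.single_mul_single_same, Matrix.smul_single, smul_eq_mul, mul_one, one_mul]
      abel

private noncomputable def φAux : RingQuot (XRel k t) →ₐ[k] Matrix (Fin 2) (Fin 2) k :=
  RingQuot.liftAlgHom k ⟨liftF t, liftF_rel t⟩

private lemma φAux_mk (w : FreeAlgebra k (Fin 2)) :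
    φAux t (RingQuot.mkAlgHom k (XRel k t) w) = liftF t w :=
  RingQuot.liftAlgHom_mkAlgHom_apply k (liftF t) (liftF_rel t) w

end Aux

/-- For every `t ≠ 0`, the algebra `X_t = k⟨x,y⟩/(x², y², yx + xy − t)` is isomorphic to
the matrix algebra `M₂(k)`. -/
theorem stmt8 {k : Type*} [Field k] (t : k) (ht : t ≠ 0) :
    Nonempty (RingQuot (XRel k t) ≃ₐ[k] Matrix (Fin 2) (Fin 2) k) := by
  classical
  set A := RingQuot (XRel k t) with hA
  let π : FreeAlgebra k (Fin 2) →ₐ[k] A := RingQuot.mkAlgHom k (XRel k t)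
  set X : A := π (ι k 0) with hX
  set Y : A := π (ι k 1) with hY
  -- relations in A
  have hXX : X * X = 0 := by
    have := RingQuot.mkAlgHom_rel k (XRel.xx (k := k) (t := t))
    simpa [hX, map_mul] using this
  have hYY : Y * Y = 0 := by
    have := RingQuot.mkAlgHom_rel k (XRel.yy (k := k) (t := t))
    simpa [hY, map_mul] using this
  have hmix : Y * X + X * Y = t • (1 : A) := by
    have := RingQuot.mkAlgHom_rel k (XRel.mix (k := k) (t := t))
    simpa [hX, hY, map_mul, map_add, AlgHom.commutes, Algebra.algebraMap_eq_smul_one] using this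
  have hYX : Y * X = t • (1 : A) - X * Y := eq_sub_of_add_eq hmix
  have hYXY : Y * (X * Y) = t • Y := by
    rw [← mul_assoc, hYX, sub_mul, smul_mul_assoc, one_mul, mul_assoc, hYY, mul_zero, sub_zero]
  -- the spanning submodule
  set F : Finset A := {1, X, Y, X * Y} with hF
  set s : Set A := (F : Set A) with hs
  set S : Submodule k A := Submodule.span k s with hS
  have h1S : (1 : A) ∈ S := Submodule.subset_span (by simp [hs, hF])
  have hXS : X ∈ S := Submodule.subset_span (by simp [hs, hF])
  have hYS : Y ∈ S := Submodule.subset_span (by simp [hs, hF])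
  have hXYS : X * Y ∈ S := Submodule.subset_span (by simp [hs, hF])
  have hmulSS : S * S ≤ S := by
    rw [hS, Submodule.span_mul_span, Submodule.span_le]
    rintro z hz
    rw [Set.mem_mul] at hz
    obtain ⟨u, hu, v, hv, rfl⟩ := hz
    simp only [hs, hF, Finset.coe_insert, Finset.coe_singleton, Set.mem_insert_iff, Set.mem_singleton_iff] at hu hv
    rcases hu with rfl | rfl | rfl | rfl <;> rcases hv with rfl | rfl | rfl | rfl
    · simpa using h1S
    · simpa using hXS
    · simpa using hYS
    · simpa using hXYS
    · simpa using hXS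
    · simp only [SetLike.mem_coe, hXX]; exact Submodule.zero_mem _
    · exact hXYS
    · rw [show X * (X * Y) = (X * X) * Y by noncomm_ring, hXX, zero_mul]
      exact Submodule.zero_mem _
    · simpa using hYS
    · rw [hYX]; exact Submodule.sub_mem _ (Submodule.smul_mem _ _ h1S) hXYS
    · simp only [SetLike.mem_coe, hYY]; exact Submodule.zero_mem _
    · rw [hYXY]; exact Submodule.smul_mem _ _ hYS
    · simpa using hXYS
    · rw [mul_assoc, hYX, mul_sub, mul_smul_comm, mul_one, ← mul_assoc, hXX, zero_mul, sub_zero]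
      exact Submodule.smul_mem _ _ hXS
    · rw [mul_assoc, hYY, mul_zero]; exact Submodule.zero_mem _
    · rw [mul_assoc, hYXY, mul_smul_comm]
      exact Submodule.smul_mem _ _ hXYS
  have hmul : ∀ u ∈ S, ∀ v ∈ S, u * v ∈ S := Submodule.mul_le.mp hmulSS
  -- the span is everything
  have htop : S = ⊤ := by
    rw [eq_top_iff]
    rintro a -
    obtain ⟨w, rfl⟩ := RingQuot.mkAlgHom_surjective k (XRel k t) a
    induction w using FreeAlgebra.induction with
    | grade0 c =>
        rw [AlgHom.commutes, Algebra.algebraMap_eq_smul_one]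
        exact Submodule.smul_mem _ _ h1S
    | grade1 i =>
        fin_cases i
        · exact hXS
        · exact hYS
    | mul a b ha hb => rw [map_mul]; exact hmul _ ha _ hb
    | add a b ha hb => rw [map_add]; exact Submodule.add_mem _ ha hb
  -- finite dimensionality
  have hfin : Module.Finite k A := by
    rw [Module.finite_def, ← htop, hS]
    exact Submodule.fg_span (Set.toFinite _)
  have hcard : F.card ≤ 4 := by
    rw [hF]
    calc (insert 1 (insert X (insert Y ({X * Y} : Finset A)))).card
        ≤ (insert X (insert Y ({X * Y} : Finset A))).card + 1 := Finset.card_insert_le _ _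
      _ ≤ ((insert Y ({X * Y} : Finset A)).card + 1) + 1 :=
          Nat.add_le_add_right (Finset.card_insert_le _ _) 1
      _ ≤ ((({X * Y} : Finset A).card + 1) + 1) + 1 :=
          Nat.add_le_add_right (Nat.add_le_add_right (Finset.card_insert_le _ _) 1) 1
      _ ≤ 4 := by simp
  have hfr : Module.finrank k A ≤ 4 := by
    have h1 : Module.finrank k S ≤ F.card := finrank_span_finset_le_card F
    have h2 : Module.finrank k A = Module.finrank k S := by
      conv_lhs => rw [← finrank_top k A]
      rw [htop]
    omega
  -- surjectivity of φAux
  have hφX : φAux t X = Matrix.single 0 1 1 := by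
    rw [hX]
    rw [show π (ι k 0) = RingQuot.mkAlgHom k (XRel k t) (ι k 0) from rfl, φAux_mk]
    simp [liftF]
  have hφY : φAux t Y = t • Matrix.single 1 0 1 := by
    rw [hY]
    rw [show π (ι k 1) = RingQuot.mkAlgHom k (XRel k t) (ι k 1) from rfl, φAux_mk]
    simp [liftF]
  have hsurj : Function.Surjective (φAux t) := by
    intro M
    have hM : M = M 0 0 • Matrix.single 0 0 1 + M 0 1 • Matrix.single 0 1 1
        + M 1 0 • Matrix.single 1 0 1 + M 1 1 • Matrix.single 1 1 1 := by
      ext i j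
      fin_cases i <;> fin_cases j <;>
        simp [Matrix.single, Matrix.add_apply, Matrix.smul_apply]
    refine ⟨(M 0 0 * t⁻¹) • (X * Y) + M 0 1 • X + (M 1 0 * t⁻¹) • Y
      + (M 1 1 * t⁻¹) • (Y * X), ?_⟩
    have ht' : t⁻¹ * t = 1 := inv_mul_cancel₀ ht
    simp only [map_add, map_smul, map_mul, hφX, hφY]
    rw [Matrix.mul_smul, Matrix.smul_mul]
    simp only [Matrix.single_mul_single_same, mul_one, smul_smul, mul_assoc, ht', mul_one]
    exact hM.symm
  -- injectivity of φAux
  have hinj : Function.Injective (φAux t) := by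
    have hrn := LinearMap.finrank_range_add_finrank_ker (φAux t).toLinearMap
    have hrange : LinearMap.range (φAux t).toLinearMap = ⊤ :=
      LinearMap.range_eq_top.mpr hsurj
    rw [hrange, finrank_top] at hrn
    have hMfr : Module.finrank k (Matrix (Fin 2) (Fin 2) k) = 4 := by
      rw [Module.finrank_matrix]
      simp
    have hfix : Module.finrank k (RingQuot (XRel k t)) = Module.finrank k A := rfl
    have hker0 : Module.finrank k (LinearMap.ker (φAux t).toLinearMap) = 0 := by omega
    have : LinearMap.ker (φAux t).toLinearMap = ⊥ := Submodule.finrank_eq_zero.mp hker0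
    exact LinearMap.ker_eq_bot.mp this
  exact ⟨AlgEquiv.ofBijective (φAux t) ⟨hinj, hsurj⟩⟩
end

section
/- The algebras A_q = k⟨x, y⟩/(x², y², yx − q·xy) and A_h = k⟨x, y⟩/(x², y², yx − h·xy), for q, h ∈ k nonzero, are isomorphic as k-algebras if and only if q = h or q = h⁻¹. -/
open FreeAlgebra

/-- Concrete model of `A_q`: elements `a + b x + c y + d xy`. -/
@[ext]
structure Model (k : Type*) (q : k) where
  a : k
  b : k
  c : k
  d : k

namespace Model

variable {k : Type*} [Field k] {q : k}

instance : Zero (Model k q) := ⟨⟨0,0,0,0⟩⟩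
instance : One (Model k q) := ⟨⟨1,0,0,0⟩⟩
instance : Add (Model k q) := ⟨fun z w => ⟨z.a+w.a, z.b+w.b, z.c+w.c, z.d+w.d⟩⟩
instance : Neg (Model k q) := ⟨fun z => ⟨-z.a,-z.b,-z.c,-z.d⟩⟩
instance : Mul (Model k q) :=
  ⟨fun z w => ⟨z.a*w.a, z.a*w.b+z.b*w.a, z.a*w.c+z.c*w.a,
    z.a*w.d+z.d*w.a+z.b*w.c+q*(z.c*w.b)⟩⟩
instance : SMul k (Model k q) := ⟨fun r z => ⟨r*z.a, r*z.b, r*z.c, r*z.d⟩⟩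

@[simp] lemma zero_a : (0 : Model k q).a = 0 := rfl
@[simp] lemma zero_b : (0 : Model k q).b = 0 := rfl
@[simp] lemma zero_c : (0 : Model k q).c = 0 := rfl
@[simp] lemma zero_d : (0 : Model k q).d = 0 := rfl
@[simp] lemma one_a : (1 : Model k q).a = 1 := rfl
@[simp] lemma one_b : (1 : Model k q).b = 0 := rfl
@[simp] lemma one_c : (1 : Model k q).c = 0 := rfl
@[simp] lemma one_d : (1 : Model k q).d = 0 := rfl
@[simp] lemma add_a (z w : Model k q) : (z+w).a = z.a + w.a := rfl
@[simp] lemma add_b (z w : Model k q) : (z+w).b = z.b + w.b := rfl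
@[simp] lemma add_c (z w : Model k q) : (z+w).c = z.c + w.c := rfl
@[simp] lemma add_d (z w : Model k q) : (z+w).d = z.d + w.d := rfl
@[simp] lemma neg_a (z : Model k q) : (-z).a = -z.a := rfl
@[simp] lemma neg_b (z : Model k q) : (-z).b = -z.b := rfl
@[simp] lemma neg_c (z : Model k q) : (-z).c = -z.c := rfl
@[simp] lemma neg_d (z : Model k q) : (-z).d = -z.d := rfl
@[simp] lemma mul_a (z w : Model k q) : (z*w).a = z.a*w.a := rfl
@[simp] lemma mul_b (z w : Model k q) : (z*w).b = z.a*w.b+z.b*w.a := rfl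
@[simp] lemma mul_c (z w : Model k q) : (z*w).c = z.a*w.c+z.c*w.a := rfl
@[simp] lemma mul_d (z w : Model k q) :
    (z*w).d = z.a*w.d+z.d*w.a+z.b*w.c+q*(z.c*w.b) := rfl
@[simp] lemma smul_a (r : k) (z : Model k q) : (r • z).a = r * z.a := rfl
@[simp] lemma smul_b (r : k) (z : Model k q) : (r • z).b = r * z.b := rfl
@[simp] lemma smul_c (r : k) (z : Model k q) : (r • z).c = r * z.c := rfl
@[simp] lemma smul_d (r : k) (z : Model k q) : (r • z).d = r * z.d := rfl

instance : AddCommGroup (Model k q) where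
  add_assoc := by intros; ext <;> simp <;> ring
  zero_add := by intros; ext <;> simp
  add_zero := by intros; ext <;> simp
  add_comm := by intros; ext <;> simp <;> ring
  neg_add_cancel := by intros; ext <;> simp
  nsmul := nsmulRec
  zsmul := zsmulRec

instance : Ring (Model k q) where
  __ := (inferInstance : AddCommGroup (Model k q))
  left_distrib := by intros; ext <;> simp <;> ring
  right_distrib := by intros; ext <;> simp <;> ring
  zero_mul := by intros; ext <;> simp
  mul_zero := by intros; ext <;> simp
  mul_assoc := by intros; ext <;> simp <;> ring
  one_mul := by intros; ext <;> simp
  mul_one := by intros; ext <;> simp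

instance : MulAction k (Model k q) where
  one_smul := by intros; ext <;> simp
  mul_smul := by intros; ext <;> simp <;> ring

instance : DistribMulAction k (Model k q) where
  smul_zero := by intros; ext <;> simp
  smul_add := by intros; ext <;> simp <;> ring

instance : Module k (Model k q) where
  add_smul := by intros; ext <;> simp <;> ring
  zero_smul := by intros; ext <;> simp

instance : Algebra k (Model k q) where
  algebraMap.toFun := fun r => ⟨r,0,0,0⟩
  algebraMap.map_one' := rfl
  algebraMap.map_mul' := by intros; ext <;> simp
  algebraMap.map_zero' := by ext <;> simp
  algebraMap.map_add' := by intros; ext <;> simp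
  commutes' := by intros; ext <;> simp <;> ring
  smul_def' := by intros; ext <;> simp <;> ring

@[simp] lemma algebraMap_a (r : k) : (algebraMap k (Model k q) r).a = r := rfl
@[simp] lemma algebraMap_b (r : k) : (algebraMap k (Model k q) r).b = 0 := rfl
@[simp] lemma algebraMap_c (r : k) : (algebraMap k (Model k q) r).c = 0 := rfl
@[simp] lemma algebraMap_d (r : k) : (algebraMap k (Model k q) r).d = 0 := rfl

/-- The generator `x`. -/
def X : Model k q := ⟨0,1,0,0⟩
/-- The generator `y`. -/
def Y : Model k q := ⟨0,0,1,0⟩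

@[simp] lemma X_a : (X : Model k q).a = 0 := rfl
@[simp] lemma X_b : (X : Model k q).b = 1 := rfl
@[simp] lemma X_c : (X : Model k q).c = 0 := rfl
@[simp] lemma X_d : (X : Model k q).d = 0 := rfl
@[simp] lemma Y_a : (Y : Model k q).a = 0 := rfl
@[simp] lemma Y_b : (Y : Model k q).b = 0 := rfl
@[simp] lemma Y_c : (Y : Model k q).c = 1 := rfl
@[simp] lemma Y_d : (Y : Model k q).d = 0 := rfl

lemma XX : (X : Model k q) * X = 0 := by ext <;> simp
lemma YY : (Y : Model k q) * Y = 0 := by ext <;> simp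
lemma YX : (Y : Model k q) * X = algebraMap k _ q * (X * Y) := by ext <;> simp

lemma decomp (z : Model k q) : z = z.a • 1 + z.b • X + z.c • Y + z.d • (X*Y) := by
  ext <;> simp

end Model

namespace ModelEquiv

variable {k : Type*} [Field k] (q : k)

/-- Image of `x` in the quotient. -/
noncomputable def Xq : RingQuot (ARel k q) := RingQuot.mkAlgHom k (ARel k q) (ι k 0)
/-- Image of `y` in the quotient. -/
noncomputable def Yq : RingQuot (ARel k q) := RingQuot.mkAlgHom k (ARel k q) (ι k 1)

lemma hXX : Xq q * Xq q = 0 := by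
  rw [Xq, ← map_mul, RingQuot.mkAlgHom_rel k (ARel.xx), map_zero]

lemma hYY : Yq q * Yq q = 0 := by
  rw [Yq, ← map_mul, RingQuot.mkAlgHom_rel k (ARel.yy), map_zero]

lemma hYX : Yq q * Xq q = q • (Xq q * Yq q) := by
  rw [Yq, Xq, ← map_mul, RingQuot.mkAlgHom_rel k (ARel.yx), map_mul, map_mul,
    AlgHom.commutes, Algebra.smul_def]

lemma hXXY : Xq q * (Xq q * Yq q) = 0 := by rw [← mul_assoc, hXX, zero_mul]
lemma hXYX : (Xq q * Yq q) * Xq q = 0 := by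
  rw [mul_assoc, hYX, mul_smul_comm, hXXY, smul_zero]
lemma hYXY : Yq q * (Xq q * Yq q) = 0 := by
  rw [← mul_assoc, hYX, smul_mul_assoc, mul_assoc, hYY, mul_zero, smul_zero]
lemma hXYY : (Xq q * Yq q) * Yq q = 0 := by rw [mul_assoc, hYY, mul_zero]
lemma hXYXY : (Xq q * Yq q) * (Xq q * Yq q) = 0 := by rw [← mul_assoc, hXYX, zero_mul]

/-- The key multiplication formula in the quotient. -/
lemma key (a b c d a' b' c' d' : k) :
    (a • 1 + b • Xq q + c • Yq q + d • (Xq q * Yq q)) *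
      (a' • 1 + b' • Xq q + c' • Yq q + d' • (Xq q * Yq q)) =
    (a*a') • 1 + (a*b'+b*a') • Xq q + (a*c'+c*a') • Yq q +
      (a*d'+d*a'+b*c'+q*(c*b')) • (Xq q * Yq q) := by
  simp only [add_mul, mul_add, smul_mul_smul_comm, one_mul, mul_one,
    hXX, hYY, hYX, hXXY, hXYX, hYXY, hXYY, hXYXY, smul_zero, smul_smul]
  module

/-- Every element of the quotient is a linear combination of `1, x, y, xy`. -/
lemma mem_span (z : RingQuot (ARel k q)) :
    ∃ a b c d : k, z = a • 1 + b • Xq q + c • Yq q + d • (Xq q * Yq q) := by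
  obtain ⟨w, rfl⟩ := RingQuot.mkAlgHom_surjective k (ARel k q) z
  induction w using FreeAlgebra.induction with
  | grade0 r =>
      exact ⟨r, 0, 0, 0, by simp [Algebra.algebraMap_eq_smul_one, AlgHom.commutes]⟩
  | grade1 i =>
      fin_cases i
      · exact ⟨0, 1, 0, 0, by simp [Xq]⟩
      · exact ⟨0, 0, 1, 0, by simp [Yq]⟩
  | add u v hu hv =>
      obtain ⟨a, b, c, d, hu⟩ := hu
      obtain ⟨a', b', c', d', hv⟩ := hv
      refine ⟨a+a', b+b', c+c', d+d', ?_⟩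
      rw [map_add, hu, hv]; module
  | mul u v hu hv =>
      obtain ⟨a, b, c, d, hu⟩ := hu
      obtain ⟨a', b', c', d', hv⟩ := hv
      exact ⟨_, _, _, _, by rw [map_mul, hu, hv, key]⟩

/-- The algebra map from the quotient to the model. -/
noncomputable def φ : RingQuot (ARel k q) →ₐ[k] Model k q :=
  RingQuot.liftAlgHom k ⟨FreeAlgebra.lift k ![Model.X, Model.Y], by
    intro u v r
    induction r with
    | xx => simp [Model.XX]
    | yy => simp [Model.YY]
    | yx => simp [Model.YX]⟩

@[simp] lemma φ_Xq : φ q (Xq q) = Model.X := by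
  rw [φ, Xq, RingQuot.liftAlgHom_mkAlgHom_apply]
  simp

@[simp] lemma φ_Yq : φ q (Yq q) = Model.Y := by
  rw [φ, Yq, RingQuot.liftAlgHom_mkAlgHom_apply]
  simp

lemma φ_comb (a b c d : k) :
    φ q (a • 1 + b • Xq q + c • Yq q + d • (Xq q * Yq q)) =
      (⟨a, b, c, d⟩ : Model k q) := by
  simp only [map_add, map_smul, map_one, map_mul, φ_Xq, φ_Yq]
  ext <;> simp [Model.X, Model.Y]

lemma φ_bijective : Function.Bijective (φ q) := by
  constructor
  · intro z w hzw
    obtain ⟨a, b, c, d, rfl⟩ := mem_span q z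
    obtain ⟨a', b', c', d', rfl⟩ := mem_span q w
    rw [φ_comb, φ_comb] at hzw
    simp only [Model.mk.injEq] at hzw
    obtain ⟨rfl, rfl, rfl, rfl⟩ := hzw
    rfl
  · intro z
    exact ⟨z.a • 1 + z.b • Xq q + z.c • Yq q + z.d • (Xq q * Yq q),
      by rw [φ_comb]⟩

/-- The quotient is isomorphic to the model. -/
noncomputable def equiv : RingQuot (ARel k q) ≃ₐ[k] Model k q :=
  AlgEquiv.ofBijective (φ q) (φ_bijective q)

end ModelEquiv

namespace ModelEquiv

variable {k : Type*} [Field k]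

/-- Swapping `x` and `y` gives an isomorphism `Model k h⁻¹ ≃ Model k h`. -/
def invEquiv (h : k) (hh : h ≠ 0) : Model k h⁻¹ ≃ₐ[k] Model k h where
  toFun z := ⟨z.a, z.c, z.b, h * z.d⟩
  invFun z := ⟨z.a, z.c, z.b, h⁻¹ * z.d⟩
  left_inv z := by ext <;> simp <;> field_simp
  right_inv z := by ext <;> simp <;> field_simp
  map_mul' z w := by ext <;> simp <;> field_simp <;> ring
  map_add' z w := by ext <;> simp [mul_add]
  commutes' r := by ext <;> simp

lemma YX' {q : k} : (Model.Y : Model k q) * Model.X = q • (Model.X * Model.Y) := by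
  rw [Model.YX, ← Algebra.smul_def]

theorem forward {q h : k} (e : Model k q ≃ₐ[k] Model k h) : q = h ∨ q = h⁻¹ := by
  have hux : e Model.X * e Model.X = 0 := by rw [← map_mul, Model.XX, map_zero]
  have hvy : e Model.Y * e Model.Y = 0 := by rw [← map_mul, Model.YY, map_zero]
  have hua : (e Model.X).a = 0 := by
    have := congrArg Model.a hux
    simpa [mul_self_eq_zero] using this
  have hva : (e Model.Y).a = 0 := by
    have := congrArg Model.a hvy
    simpa [mul_self_eq_zero] using this
  set b := (e Model.X).b with hb_def
  set c := (e Model.X).c with hc_def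
  set b' := (e Model.Y).b with hb'_def
  set c' := (e Model.Y).c with hc'_def
  have h1 : b * c * (1 + h) = 0 := by
    have := congrArg Model.d hux
    simp only [Model.mul_d, Model.zero_d, hua, zero_mul, mul_zero, zero_add, add_zero] at this
    linear_combination this
  have h2 : b' * c' * (1 + h) = 0 := by
    have := congrArg Model.d hvy
    simp only [Model.mul_d, Model.zero_d, hva, zero_mul, mul_zero, zero_add, add_zero] at this
    linear_combination this
  have hrel : e Model.Y * e Model.X = q • (e Model.X * e Model.Y) := by
    rw [← map_mul, ← map_mul, ← map_smul, YX']
  have hE : b' * c + h * (c' * b) = q * (b * c' + h * (c * b')) := by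
    have := congrArg Model.d hrel
    simp only [Model.mul_d, Model.smul_d, hua, hva, zero_mul, mul_zero, zero_add,
      add_zero] at this
    linear_combination this
  have hxy : e Model.X * e Model.Y = ⟨0, 0, 0, b * c' + h * (c * b')⟩ := by
    ext <;> simp [hua, hva] <;> rfl
  have ht : b * c' + h * (c * b') ≠ 0 := by
    intro h0
    have h3 : e (Model.X * Model.Y) = e 0 := by
      rw [map_mul, hxy, map_zero, h0]; rfl
    have h4 := congrArg Model.d (e.injective h3)
    simp [Model.X, Model.Y] at h4
  have hdet : b * c' - c * b' ≠ 0 := by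
    intro hd
    set s := c' * (e Model.X).d + (-c) * (e Model.Y).d with hs_def
    have hw : e (c' • Model.X + (-c) • Model.Y) = ⟨0, 0, 0, s⟩ := by
      rw [map_add, map_smul, map_smul]
      ext
      · simp [hua, hva]
      · show c' * b + -c * b' = 0
        linear_combination hd
      · show c' * c + -c * c' = 0
        ring
      · rfl
    have h5 : e (c' • Model.X + (-c) • Model.Y) = e ((s / (b * c' + h * (c * b'))) • (Model.X * Model.Y)) := by
      rw [hw, map_smul, map_mul, hxy]
      ext
      · simp
      · simp
      · simp
      · show s = s / (b * c' + h * (c * b')) * (b * c' + h * (c * b'))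
        rw [div_mul_cancel₀ _ ht]
    have h6 := e.injective h5
    have hbcomp := congrArg Model.b h6
    have hccomp := congrArg Model.c h6
    simp [Model.X, Model.Y] at hbcomp hccomp
    exact ht (by rw [hbcomp, hccomp]; ring)
  by_cases hneg : (1 : k) + h = 0
  · -- h = -1, and the relation forces q = -1 = h
    left
    have hh1 : h = -1 := by linear_combination hneg
    have : (b * c' - c * b') * (q + 1) = 0 := by
      rw [hh1] at hE
      linear_combination -hE
    have hq1 : q + 1 = 0 := by
      rcases mul_eq_zero.mp this with h' | h'
      · exact absurd h' hdet
      · exact h'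
    rw [hh1]; linear_combination hq1
  · have hbc : b * c = 0 := by
      rcases mul_eq_zero.mp h1 with h' | h'
      · exact h'
      · exact absurd h' hneg
    have hbc' : b' * c' = 0 := by
      rcases mul_eq_zero.mp h2 with h' | h'
      · exact h'
      · exact absurd h' hneg
    rcases mul_eq_zero.mp hbc with hb0 | hc0
    · -- b = 0, so c ≠ 0, b' ≠ 0, c' = 0, and q * h = 1
      right
      have hc0 : c ≠ 0 := fun h' => hdet (by rw [hb0, h']; ring)
      have hb'0 : b' ≠ 0 := fun h' => hdet (by rw [hb0, h']; ring)
      have hc'0 : c' = 0 := by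
        rcases mul_eq_zero.mp hbc' with h' | h'
        · exact absurd h' hb'0
        · exact h'
      have hqh : q * h = 1 := by
        rw [hb0, hc'0] at hE
        have : c * b' * (q * h - 1) = 0 := by linear_combination -hE
        rcases mul_eq_zero.mp this with h' | h'
        · exact absurd (by rw [hb0]; linear_combination -h') hdet
        · linear_combination h'
      exact eq_inv_of_mul_eq_one_left (by linear_combination hqh)
    · -- c = 0, so b ≠ 0, c' ≠ 0, b' = 0, and q = h
      left
      have hb0 : b ≠ 0 := fun h' => hdet (by rw [hc0, h']; ring)
      have hc'0 : c' ≠ 0 := fun h' => hdet (by rw [hc0, h']; ring)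
      have hb'0 : b' = 0 := by
        rcases mul_eq_zero.mp hbc' with h' | h'
        · exact h'
        · exact absurd h' hc'0
      rw [hc0, hb'0] at hE
      have : (b * c') * (q - h) = 0 := by linear_combination -hE
      rcases mul_eq_zero.mp this with h' | h'
      · exact absurd (by rw [hc0]; linear_combination h') hdet
      · linear_combination h'

end ModelEquiv

/-- For nonzero `q, h ∈ k`, the algebras `A_q` and `A_h` are isomorphic as `k`-algebras
if, and only if, `q = h` or `q = h⁻¹`. -/
theorem stmt9 {k : Type*} [Field k] (q h : k) (hq : q ≠ 0) (hh : h ≠ 0) :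
    Nonempty (RingQuot (ARel k q) ≃ₐ[k] RingQuot (ARel k h)) ↔ (q = h ∨ q = h⁻¹) := by
  constructor
  · rintro ⟨e⟩
    exact ModelEquiv.forward (((ModelEquiv.equiv q).symm.trans e).trans (ModelEquiv.equiv h))
  · rintro (rfl | rfl)
    · exact ⟨AlgEquiv.refl⟩
    · exact ⟨((ModelEquiv.equiv h⁻¹).trans (ModelEquiv.invEquiv h hh)).trans
        (ModelEquiv.equiv h).symm⟩
end

section
/- A linear map yx ↦ a + bx + cy + dxy defines a twisting map τ : k[ξ] ⊗ k[ξ] → k[ξ] ⊗ k[ξ] (between two copies of the dual numbers generated by x and y with x² = y² = 0) if and only if b = c = 0 and a(1 + d) = 0. Hence every twisted tensor product k[ξ] ⊗_τ k[ξ] is isomorphic to A_q for some q ∈ k or to X_t for some t ∈ k. -/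
set_option maxHeartbeats 1000000
set_option maxRecDepth 8000
set_option synthInstance.maxHeartbeats 400000

open TensorProduct DualNumber FreeAlgebra

/-- Relations for the algebra `k⟨x,y⟩/(x², y², yx − (a + bx + cy + dxy))`. -/
inductive PRel (k : Type*) [Field k] (a b c d : k) :
    FreeAlgebra k (Fin 2) → FreeAlgebra k (Fin 2) → Prop
  | xx : PRel k a b c d (ι k 0 * ι k 0) 0
  | yy : PRel k a b c d (ι k 1 * ι k 1) 0
  | yx : PRel k a b c d (ι k 1 * ι k 0)
      (algebraMap k _ a + algebraMap k _ b * ι k 0 + algebraMap k _ c * ι k 1 +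
        algebraMap k _ d * (ι k 0 * ι k 1))

section Aux

variable {k : Type*} [Field k]

/-- The dual numbers are linearly equivalent to `Fin 2 → k`. -/
noncomputable def dEquiv (k : Type*) [Field k] : DualNumber k ≃ₗ[k] (Fin 2 → k) where
  toFun p := ![p.fst, p.snd]
  invFun f := TrivSqZeroExt.inl (f 0) + TrivSqZeroExt.inr (f 1)
  map_add' p q := by funext i; fin_cases i <;> simp
  map_smul' r p := by funext i; fin_cases i <;> simp
  left_inv p := by apply TrivSqZeroExt.ext <;> simp
  right_inv f := by funext i; fin_cases i <;> simp

/-- The standard basis `{1, ε}` of the dual numbers. -/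
noncomputable def dBasis (k : Type*) [Field k] : Module.Basis (Fin 2) k (DualNumber k) :=
  Module.Basis.ofEquivFun (dEquiv k)

@[simp] theorem dBasis_zero : dBasis k 0 = 1 := by
  apply TrivSqZeroExt.ext <;> simp [dBasis, dEquiv]

@[simp] theorem dBasis_one : dBasis k 1 = ε := by
  apply TrivSqZeroExt.ext <;> simp [dBasis, dEquiv]

/-- Pairing of two linear functionals on `k[ε]` into a functional on the tensor square. -/
noncomputable def pairF (k : Type*) [Field k] (φ ψ : DualNumber k →ₗ[k] k) :
    DualNumber k ⊗[k] DualNumber k →ₗ[k] k :=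
  (TensorProduct.lid k k).toLinearMap ∘ₗ TensorProduct.map φ ψ

@[simp] theorem pairF_tmul (φ ψ : DualNumber k →ₗ[k] k) (x y : DualNumber k) :
    pairF k φ ψ (x ⊗ₜ y) = φ x * ψ y := by
  simp [pairF, smul_eq_mul]

/-- First coordinate of a dual number, as a linear map. -/
noncomputable def cF (k : Type*) [Field k] : DualNumber k →ₗ[k] k :=
  (TrivSqZeroExt.fstHom k k k).toLinearMap

/-- Second coordinate of a dual number, as a linear map. -/
noncomputable def cS (k : Type*) [Field k] : DualNumber k →ₗ[k] k :=
  TrivSqZeroExt.sndHom k k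

@[simp] theorem cF_one : cF k 1 = 1 := by simp [cF]
@[simp] theorem cF_eps : cF k ε = 0 := by simp [cF]
@[simp] theorem cS_one : cS k (1 : DualNumber k) = 0 := by simp [cS]
@[simp] theorem cS_eps : cS k (ε : DualNumber k) = 1 := by simp [cS]

theorem prel_eq_arel (d : k) : PRel k 0 0 0 d = ARel k d := by
  funext x y
  apply propext
  constructor
  · rintro (_ | _ | _)
    · exact ARel.xx
    · exact ARel.yy
    · simpa using ARel.yx
  · rintro (_ | _ | _)
    · exact PRel.xx
    · exact PRel.yy
    · simpa using PRel.yx (k := k) (a := 0) (b := 0) (c := 0) (d := d)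

theorem prel_iso_xrel (a : k) :
    Nonempty (RingQuot (PRel k a 0 0 (-1)) ≃ₐ[k] RingQuot (XRel k a)) := by
  let F : FreeAlgebra k (Fin 2) →ₐ[k] RingQuot (XRel k a) := RingQuot.mkAlgHom k (XRel k a)
  let G : FreeAlgebra k (Fin 2) →ₐ[k] RingQuot (PRel k a 0 0 (-1)) :=
    RingQuot.mkAlgHom k (PRel k a 0 0 (-1))
  have harg : (algebraMap k (FreeAlgebra k (Fin 2)) a + algebraMap k _ (0 : k) * ι k 0 +
      algebraMap k _ (0 : k) * ι k 1 + algebraMap k _ (-1 : k) * (ι k 0 * ι k 1)) =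
      algebraMap k (FreeAlgebra k (Fin 2)) a - ι k 0 * ι k 1 := by
    simp only [map_zero, zero_mul, add_zero, map_neg, map_one, neg_one_mul]
    rw [sub_eq_add_neg]
  have hF : ∀ x y, PRel k a 0 0 (-1) x y → F x = F y := by
    rintro x y (_ | _ | _)
    · exact RingQuot.mkAlgHom_rel k XRel.xx
    · exact RingQuot.mkAlgHom_rel k XRel.yy
    · have h := RingQuot.mkAlgHom_rel k (XRel.mix (k := k) (t := a))
      rw [map_add] at h
      show F _ = F _
      rw [harg, map_sub, eq_sub_iff_add_eq]
      exact h
  have hG : ∀ x y, XRel k a x y → G x = G y := by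
    rintro x y (_ | _ | _)
    · exact RingQuot.mkAlgHom_rel k PRel.xx
    · exact RingQuot.mkAlgHom_rel k PRel.yy
    · have h := RingQuot.mkAlgHom_rel k (PRel.yx (k := k) (a := a) (b := 0) (c := 0) (d := -1))
      rw [harg, map_sub] at h
      show G _ = G _
      rw [map_add, h, sub_add_cancel]
  refine ⟨AlgEquiv.ofAlgHom (RingQuot.liftAlgHom k ⟨F, hF⟩) (RingQuot.liftAlgHom k ⟨G, hG⟩) ?_ ?_⟩
  · apply RingQuot.ringQuot_ext'
    apply FreeAlgebra.hom_ext
    funext i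
    simp [RingQuot.liftAlgHom_mkAlgHom_apply, F, G]
  · apply RingQuot.ringQuot_ext'
    apply FreeAlgebra.hom_ext
    funext i
    simp [RingQuot.liftAlgHom_mkAlgHom_apply, F, G]

end Aux

/-- A unital linear map `τ` on `k[ξ] ⊗ k[ξ]` determined by
`τ(y ⊗ x) = a·1⊗1 + b·x⊗1 + c·1⊗y + d·x⊗y` is a twisting map if, and only if,
`b = c = 0` and `a(1 + d) = 0`; hence every twisted tensor product `k[ξ] ⊗_τ k[ξ]`
is isomorphic to `A_q` for some `q ∈ k` or to `X_t` for some `t ∈ k`. -/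
theorem stmt10 {k : Type*} [Field k] (a b c d : k)
    (τ : DualNumber k ⊗[k] DualNumber k →ₗ[k] DualNumber k ⊗[k] DualNumber k)
    (hτ11 : τ ((1 : DualNumber k) ⊗ₜ (1 : DualNumber k)) =
      (1 : DualNumber k) ⊗ₜ (1 : DualNumber k))
    (hτe1 : τ ((ε : DualNumber k) ⊗ₜ (1 : DualNumber k)) = (1 : DualNumber k) ⊗ₜ ε)
    (hτ1e : τ ((1 : DualNumber k) ⊗ₜ (ε : DualNumber k)) = ε ⊗ₜ (1 : DualNumber k))
    (hτee : τ ((ε : DualNumber k) ⊗ₜ (ε : DualNumber k)) =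
      a • ((1 : DualNumber k) ⊗ₜ (1 : DualNumber k)) +
        b • ((ε : DualNumber k) ⊗ₜ (1 : DualNumber k)) +
        c • ((1 : DualNumber k) ⊗ₜ (ε : DualNumber k)) +
        d • ((ε : DualNumber k) ⊗ₜ (ε : DualNumber k))) :
    (((τ ∘ₗ LinearMap.lTensor (DualNumber k) (LinearMap.mul' k (DualNumber k)) =
        LinearMap.rTensor (DualNumber k) (LinearMap.mul' k (DualNumber k)) ∘ₗ
          (TensorProduct.assoc k (DualNumber k) (DualNumber k)
            (DualNumber k)).symm.toLinearMap ∘ₗ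
          LinearMap.lTensor (DualNumber k) τ ∘ₗ
          (TensorProduct.assoc k (DualNumber k) (DualNumber k)
            (DualNumber k)).toLinearMap ∘ₗ
          LinearMap.rTensor (DualNumber k) τ ∘ₗ
          (TensorProduct.assoc k (DualNumber k) (DualNumber k)
            (DualNumber k)).symm.toLinearMap) ∧
      (τ ∘ₗ LinearMap.rTensor (DualNumber k) (LinearMap.mul' k (DualNumber k)) =
        LinearMap.lTensor (DualNumber k) (LinearMap.mul' k (DualNumber k)) ∘ₗ
          (TensorProduct.assoc k (DualNumber k) (DualNumber k)
            (DualNumber k)).toLinearMap ∘ₗ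
          LinearMap.rTensor (DualNumber k) τ ∘ₗ
          (TensorProduct.assoc k (DualNumber k) (DualNumber k)
            (DualNumber k)).symm.toLinearMap ∘ₗ
          LinearMap.lTensor (DualNumber k) τ ∘ₗ
          (TensorProduct.assoc k (DualNumber k) (DualNumber k)
            (DualNumber k)).toLinearMap)) ↔
      (b = 0 ∧ c = 0 ∧ a * (1 + d) = 0)) ∧
    (b = 0 → c = 0 → a * (1 + d) = 0 →
      Nonempty (RingQuot (PRel k a b c d) ≃ₐ[k] RingQuot (ARel k d)) ∨
        ∃ t : k, Nonempty (RingQuot (PRel k a b c d) ≃ₐ[k] RingQuot (XRel k t))) := by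
  constructor
  · constructor
    · rintro ⟨h1, h2⟩
      have E1 := LinearMap.congr_fun h1
        ((ε : DualNumber k) ⊗ₜ ((ε : DualNumber k) ⊗ₜ (ε : DualNumber k)))
      have E2 := LinearMap.congr_fun h2
        (((ε : DualNumber k) ⊗ₜ (ε : DualNumber k)) ⊗ₜ (ε : DualNumber k))
      simp only [LinearMap.comp_apply, LinearEquiv.coe_coe,
        LinearMap.lTensor_tmul, LinearMap.rTensor_tmul, TensorProduct.assoc_tmul,
        TensorProduct.assoc_symm_tmul, LinearMap.mul'_apply, map_add, map_smul,
        hτ11, hτe1, hτ1e, hτee, eps_mul_eps, one_mul, mul_one, zero_smul, smul_zero,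
        add_tmul, tmul_add, zero_tmul, tmul_zero, map_zero, ← TensorProduct.smul_tmul',
        tmul_smul, add_zero, zero_add, one_smul, smul_smul, smul_mul_assoc, mul_smul_comm] at E1 E2
      have hc : c = 0 := by
        have := congrArg (pairF k (cF k) (cS k)) E1
        simp at this
        exact this
      have hb : b = 0 := by
        have := congrArg (pairF k (cS k) (cF k)) E2
        simp at this
        exact this
      refine ⟨hb, hc, ?_⟩
      have := congrArg (pairF k (cS k) (cF k)) E1
      simp [hc] at this
      linear_combination -this
    · rintro ⟨hb, hc, ha⟩
      subst hb hc
      constructor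
      · apply Module.Basis.ext ((dBasis k).tensorProduct ((dBasis k).tensorProduct (dBasis k)))
        rintro ⟨i, j, l⟩
        fin_cases i <;> fin_cases j <;> fin_cases l <;>
          simp only [Module.Basis.tensorProduct_apply', LinearMap.comp_apply, LinearEquiv.coe_coe,
            LinearMap.lTensor_tmul, LinearMap.rTensor_tmul, TensorProduct.assoc_tmul,
            TensorProduct.assoc_symm_tmul, LinearMap.mul'_apply, map_add, map_smul,
            hτ11, hτe1, hτ1e, hτee, eps_mul_eps, one_mul, mul_one, zero_smul, smul_zero,
            add_tmul, tmul_add, zero_tmul, tmul_zero, map_zero, ← TensorProduct.smul_tmul',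
            add_zero, zero_add, one_smul, smul_smul, Fin.mk_zero, Fin.mk_one,
            dBasis_zero, dBasis_one, tmul_smul, smul_mul_assoc, mul_smul_comm]
        all_goals (match_scalars <;> first | linear_combination ha | linear_combination -ha)
      · apply Module.Basis.ext (((dBasis k).tensorProduct (dBasis k)).tensorProduct (dBasis k))
        rintro ⟨⟨i, j⟩, l⟩
        fin_cases i <;> fin_cases j <;> fin_cases l <;>
          simp only [Module.Basis.tensorProduct_apply', LinearMap.comp_apply, LinearEquiv.coe_coe,
            LinearMap.lTensor_tmul, LinearMap.rTensor_tmul, TensorProduct.assoc_tmul,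
            TensorProduct.assoc_symm_tmul, LinearMap.mul'_apply, map_add, map_smul,
            hτ11, hτe1, hτ1e, hτee, eps_mul_eps, one_mul, mul_one, zero_smul, smul_zero,
            add_tmul, tmul_add, zero_tmul, tmul_zero, map_zero, ← TensorProduct.smul_tmul',
            add_zero, zero_add, one_smul, smul_smul, Fin.mk_zero, Fin.mk_one,
            dBasis_zero, dBasis_one, tmul_smul, smul_mul_assoc, mul_smul_comm]
        all_goals (match_scalars <;> first | linear_combination ha | linear_combination -ha)
  · intro hb hc ha
    subst hb hc
    by_cases h0 : a = 0
    · subst h0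
      left
      rw [prel_eq_arel]
      exact ⟨AlgEquiv.refl⟩
    · right
      have hd : d = -1 := by
        rcases mul_eq_zero.mp ha with h | h
        · exact absurd h h0
        · linear_combination h
      subst hd
      exact ⟨a, prel_iso_xrel a⟩
end

section
/- Let k be a field of characteristic ≠ 2, α a non-square in k, and q ∈ k with q² ≠ 4αβ. Then C_q = k⟨x,y⟩/(x²−α, y²−β, xy+yx−q) is isomorphic to M₂(k) if and only if there exist u, v ∈ k with u² − αv² = q² − 4αβ. -/
open FreeAlgebra

section Aux

open Module

variable {k : Type*} [Field k]

theorem aux_norm_mul {A : Type*} [Ring A] [Algebra k A] (α γ : k) (X Z : A)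
    (hX : X * X = α • 1) (hZ : Z * Z = γ • 1) (hXZ : X * Z = -(Z * X))
    (a b c d : k) :
    (a • 1 + b • X + c • Z + d • (X * Z)) * (a • 1 - b • X - c • Z - d • (X * Z)) =
      (a ^ 2 - α * b ^ 2 - γ * c ^ 2 + α * γ * d ^ 2) • (1 : A) := by
  have hZX : Z * X = -(X * Z) := by rw [hXZ, neg_neg]
  have p1 : X * (X * Z) = α • Z := by rw [← mul_assoc, hX, smul_mul_assoc, one_mul]
  have p4 : (X * Z) * Z = γ • X := by rw [mul_assoc, hZ, mul_smul_comm, mul_one]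
  have p2 : Z * (X * Z) = -(γ • X) := by
    rw [← mul_assoc, hZX, neg_mul, mul_assoc, hZ, mul_smul_comm, mul_one]
  have p3 : (X * Z) * X = -(α • Z) := by
    rw [mul_assoc, hZX, mul_neg, p1]
  have p5 : (X * Z) * (X * Z) = -((α * γ) • (1 : A)) := by
    rw [mul_assoc, ← mul_assoc Z X Z, hZX, neg_mul, mul_neg, p4, mul_smul_comm, hX,
      smul_smul, mul_comm γ α]
  simp only [mul_add, mul_sub, add_mul, sub_mul, smul_mul_assoc, mul_smul_comm, one_mul,
    mul_one, hX, hZ, hZX, p1, p2, p3, p4, p5, smul_smul, smul_neg, smul_add, smul_sub]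
  module

theorem aux_scalar_injective {a : k} (h : a • (1 : Matrix (Fin 2) (Fin 2) k) = 0) : a = 0 := by
  rcases smul_eq_zero.mp h with h | h
  · exact h
  · exact absurd h one_ne_zero

theorem aux_not_scalar_sq {α : k} (hα : ∀ c : k, c ^ 2 ≠ α) {X : Matrix (Fin 2) (Fin 2) k}
    (hX : X * X = α • 1) {s t : k} (hs : s ≠ 0) (h : s • X = t • (1 : Matrix (Fin 2) (Fin 2) k)) :
    False := by
  have hXeq : X = (t / s) • (1 : Matrix (Fin 2) (Fin 2) k) := by
    rw [div_eq_mul_inv, mul_comm, mul_smul]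
    rw [← h, ← mul_smul, inv_mul_cancel₀ hs, one_smul]
  have h1 : X * X = ((t / s) * (t / s)) • (1 : Matrix (Fin 2) (Fin 2) k) := by
    rw [hXeq, smul_mul_assoc, mul_smul_comm, one_mul, smul_smul]
  rw [hX] at h1
  have h2 := sub_eq_zero.mpr h1
  rw [← sub_smul] at h2
  have h3 := aux_scalar_injective h2
  exact hα (t / s) (by rw [pow_two]; linear_combination -h3)

theorem aux_li (h2 : (2 : k) ≠ 0) {α γ : k} (hα : ∀ c : k, c ^ 2 ≠ α) (hγ : γ ≠ 0)
    {X Z : Matrix (Fin 2) (Fin 2) k} (hX : X * X = α • 1) (hZ : Z * Z = γ • 1)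
    (hXZ : X * Z = -(Z * X)) :
    LinearIndependent k ![(1 : Matrix (Fin 2) (Fin 2) k), X, Z, X * Z] := by
  have hα0 : α ≠ 0 := fun h => hα 0 (by simpa [h])
  have hZX : Z * X = -(X * Z) := by rw [hXZ, neg_neg]
  rw [Fintype.linearIndependent_iff]
  intro g hg
  rw [Fin.sum_univ_four] at hg
  simp only [Matrix.cons_val_zero, Matrix.cons_val_one, Matrix.head_cons,
    Matrix.cons_val_two, Matrix.tail_cons, Matrix.cons_val_three] at hg
  set a := g 0 with ha'; set b := g 1 with hb'; set c := g 2 with hc'; set d := g 3 with hd'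
  have e1 : (α * b) • (1 : Matrix (Fin 2) (Fin 2) k) + a • X - (α * d) • Z - c • (X * Z) = 0 := by
    have h := congrArg (· * X) hg
    simp only [add_mul, smul_mul_assoc, one_mul, zero_mul, hX] at h
    rw [mul_assoc, hZX, mul_neg, ← mul_assoc, hX, smul_mul_assoc, one_mul] at h
    calc (α * b) • (1 : Matrix (Fin 2) (Fin 2) k) + a • X - (α * d) • Z - c • (X * Z)
        = a • X + b • (α • 1) + c • -(X * Z) + d • -(α • Z) := by module
      _ = 0 := h
  have e2 : (α * b) • (1 : Matrix (Fin 2) (Fin 2) k) + a • X + (α * d) • Z + c • (X * Z) = 0 := by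
    have h := congrArg (X * ·) hg
    simp only [mul_add, mul_smul_comm, mul_one, mul_zero, hX] at h
    rw [← mul_assoc, hX, smul_mul_assoc, one_mul] at h
    calc (α * b) • (1 : Matrix (Fin 2) (Fin 2) k) + a • X + (α * d) • Z + c • (X * Z)
        = a • X + b • (α • 1) + c • (X * Z) + d • (α • Z) := by module
      _ = 0 := h
  have key1 : (2 * (α * b)) • (1 : Matrix (Fin 2) (Fin 2) k) + (2 * a) • X = 0 := by
    calc (2 * (α * b)) • (1 : Matrix (Fin 2) (Fin 2) k) + (2 * a) • X
        = ((α * b) • (1 : Matrix (Fin 2) (Fin 2) k) + a • X - (α * d) • Z - c • (X * Z))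
          + ((α * b) • (1 : Matrix (Fin 2) (Fin 2) k) + a • X + (α * d) • Z + c • (X * Z)) := by
          module
      _ = 0 := by rw [e1, e2, add_zero]
  have ha : a = 0 := by
    by_contra ha
    have hs : (2 : k) * a ≠ 0 := mul_ne_zero h2 ha
    have : (2 * a) • X = (-(2 * (α * b))) • (1 : Matrix (Fin 2) (Fin 2) k) := by
      rw [neg_smul]
      exact eq_neg_of_add_eq_zero_right key1
    exact aux_not_scalar_sq hα hX hs this
  have hb : b = 0 := by
    rw [ha, mul_zero, zero_smul, add_zero] at key1
    have := aux_scalar_injective key1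
    simpa [h2, hα0, mul_eq_zero] using this
  have key2 : c • Z + d • (X * Z) = 0 := by
    rw [ha, hb] at hg
    calc c • Z + d • (X * Z)
        = (0 : k) • (1 : Matrix (Fin 2) (Fin 2) k) + (0 : k) • X + c • Z + d • (X * Z) := by
          module
      _ = 0 := hg
  have key3 : (γ * c) • (1 : Matrix (Fin 2) (Fin 2) k) - (γ * d) • X = 0 := by
    have h := congrArg (Z * ·) key2
    simp only [mul_add, mul_smul_comm, mul_zero, hZ] at h
    rw [← mul_assoc, hZX, neg_mul, mul_assoc, hZ, mul_smul_comm, mul_one] at h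
    calc (γ * c) • (1 : Matrix (Fin 2) (Fin 2) k) - (γ * d) • X
        = c • (γ • 1) + d • -(γ • X) := by module
      _ = 0 := h
  have hd : d = 0 := by
    by_contra hd
    have hs : γ * d ≠ 0 := mul_ne_zero hγ hd
    exact aux_not_scalar_sq hα hX hs (sub_eq_zero.mp key3).symm
  have hc : c = 0 := by
    rw [hd, mul_zero, zero_smul, sub_zero] at key3
    have := aux_scalar_injective key3
    simpa [hγ, mul_eq_zero] using this
  intro i
  fin_cases i
  · exact ha
  · exact hb
  · exact hc
  · exact hd

theorem aux_span (h2 : (2 : k) ≠ 0) {α γ : k} (hα : ∀ c : k, c ^ 2 ≠ α) (hγ : γ ≠ 0)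
    {X Z : Matrix (Fin 2) (Fin 2) k} (hX : X * X = α • 1) (hZ : Z * Z = γ • 1)
    (hXZ : X * Z = -(Z * X)) :
    Submodule.span k (Set.range ![1, X, Z, X * Z]) = ⊤ := by
  have li := aux_li h2 hα hγ hX hZ hXZ
  have hcard : Fintype.card (Fin 4) = finrank k (Matrix (Fin 2) (Fin 2) k) := by
    simp [finrank_matrix]
  rw [← coe_basisOfLinearIndependentOfCardEqFinrank li hcard]
  exact Basis.span_eq _

end Aux

/-- Relations for `C_q = k⟨x,y⟩/(x² − α, y² − β, xy + yx − q)`. -/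
inductive CRel (k : Type*) [Field k] (α β q : k) :
    FreeAlgebra k (Fin 2) → FreeAlgebra k (Fin 2) → Prop
  | xx : CRel k α β q (ι k 0 * ι k 0) (algebraMap k _ α)
  | yy : CRel k α β q (ι k 1 * ι k 1) (algebraMap k _ β)
  | mix : CRel k α β q (ι k 0 * ι k 1 + ι k 1 * ι k 0) (algebraMap k _ q)

section RQ

variable {k : Type*} [Field k]

theorem crel_span (α β q : k) :
    Submodule.span k (Set.range
      ![(1 : RingQuot (CRel k α β q)),
        RingQuot.mkAlgHom k (CRel k α β q) (ι k 0),
        RingQuot.mkAlgHom k (CRel k α β q) (ι k 1),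
        RingQuot.mkAlgHom k (CRel k α β q) (ι k 0) * RingQuot.mkAlgHom k (CRel k α β q) (ι k 1)])
      = ⊤ := by
  set R := RingQuot (CRel k α β q)
  set f := RingQuot.mkAlgHom k (CRel k α β q) with hf
  set x := f (ι k 0) with hx
  set y := f (ι k 1) with hy
  have hxx : x * x = algebraMap k R α := by
    rw [hx, ← map_mul, RingQuot.mkAlgHom_rel k CRel.xx, AlgHom.commutes]
  have hyy : y * y = algebraMap k R β := by
    rw [hy, ← map_mul, RingQuot.mkAlgHom_rel k CRel.yy, AlgHom.commutes]
  have hmix : x * y + y * x = algebraMap k R q := by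
    rw [hx, hy, ← map_mul, ← map_mul, ← map_add, RingQuot.mkAlgHom_rel k CRel.mix,
      AlgHom.commutes]
  have hyx : y * x = algebraMap k R q - x * y := eq_sub_of_add_eq' hmix
  have hset : Set.range ![(1 : R), x, y, x * y] = {(1 : R), x, y, x * y} := by
    rw [Matrix.range_cons, Matrix.range_cons, Matrix.range_cons, Matrix.range_cons_empty,
      Set.singleton_union, Set.singleton_union, Set.singleton_union]
  rw [hset]
  set S := Submodule.span k ({(1 : R), x, y, x * y} : Set R) with hS
  have mem1 : (1 : R) ∈ S := Submodule.subset_span (by simp)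
  have memx : x ∈ S := Submodule.subset_span (by simp)
  have memy : y ∈ S := Submodule.subset_span (by simp)
  have memxy : x * y ∈ S := Submodule.subset_span (by simp)
  have memc : ∀ c : k, algebraMap k R c ∈ S := fun c => by
    rw [Algebra.algebraMap_eq_smul_one]; exact S.smul_mem c mem1
  have t0 : x * (x * y) = α • y := by rw [← mul_assoc, hxx, ← Algebra.smul_def]
  have t1 : y * (x * y) = q • y - x * algebraMap k R β := by
    rw [← mul_assoc, hyx, sub_mul, mul_assoc, hyy, ← Algebra.smul_def]
  have t1' : y * (x * y) = q • y - β • x := by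
    rw [t1, ← Algebra.commutes, ← Algebra.smul_def]
  have t2 : (x * y) * x = q • x - α • y := by
    rw [mul_assoc, hyx, mul_sub, t0, ← Algebra.commutes, ← Algebra.smul_def]
  have t3 : (x * y) * y = β • x := by
    rw [mul_assoc, hyy, ← Algebra.commutes, ← Algebra.smul_def]
  have t4 : (x * y) * (x * y) = q • (x * y) - (β * α) • (1 : R) := by
    rw [mul_assoc, t1', mul_sub, mul_smul_comm, mul_smul_comm, hxx,
      Algebra.algebraMap_eq_smul_one, smul_smul]
  have hmul : ∀ z w : R, z ∈ S → w ∈ S → z * w ∈ S := by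
    have base : ∀ z ∈ ({(1 : R), x, y, x * y} : Set R), ∀ w ∈ ({(1 : R), x, y, x * y} : Set R),
        z * w ∈ S := by
      intro z hz w hw
      simp only [Set.mem_insert_iff, Set.mem_singleton_iff] at hz hw
      rcases hz with rfl | rfl | rfl | rfl <;> rcases hw with rfl | rfl | rfl | rfl
      · rw [one_mul]; exact mem1
      · rw [one_mul]; exact memx
      · rw [one_mul]; exact memy
      · rw [one_mul]; exact memxy
      · rw [mul_one]; exact memx
      · rw [hxx]; exact memc α
      · exact memxy
      · rw [t0]; exact S.smul_mem α memy
      · rw [mul_one]; exact memy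
      · rw [hyx]; exact Submodule.sub_mem S (memc q) memxy
      · rw [hyy]; exact memc β
      · rw [t1']; exact Submodule.sub_mem S (S.smul_mem q memy) (S.smul_mem β memx)
      · rw [mul_one]; exact memxy
      · rw [t2]; exact Submodule.sub_mem S (S.smul_mem q memx) (S.smul_mem α memy)
      · rw [t3]; exact S.smul_mem β memx
      · rw [t4]; exact Submodule.sub_mem S (S.smul_mem q memxy) (S.smul_mem (β * α) mem1)
    intro z w hz hw
    induction hz using Submodule.span_induction with
    | mem z hz =>
      induction hw using Submodule.span_induction with
      | mem w hw => exact base _ hz _ hw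
      | zero => rw [mul_zero]; exact S.zero_mem
      | add w₁ w₂ _ _ h1 h2 => rw [mul_add]; exact S.add_mem h1 h2
      | smul c w _ h1 => rw [mul_smul_comm]; exact S.smul_mem c h1
    | zero => rw [zero_mul]; exact S.zero_mem
    | add z₁ z₂ _ _ h1 h2 => rw [add_mul]; exact S.add_mem h1 h2
    | smul c z _ h1 => rw [smul_mul_assoc]; exact S.smul_mem c h1
  rw [eq_top_iff]
  intro z hz
  obtain ⟨w, rfl⟩ := RingQuot.mkAlgHom_surjective k (CRel k α β q) z
  clear hz
  induction w using FreeAlgebra.induction with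
  | grade0 c => exact (AlgHom.commutes f c) ▸ memc c
  | grade1 i =>
    fin_cases i
    · exact memx
    · exact memy
  | mul a b ha hb => rw [map_mul]; exact hmul _ _ ha hb
  | add a b ha hb => rw [map_add]; exact S.add_mem ha hb

end RQ

/-- Over a field of characteristic ≠ 2 with `α` a non-square and `q² ≠ 4αβ`, the algebra
`C_q` is isomorphic to `M₂(k)` if, and only if, `q² − 4αβ` is a norm `u² − αv²` from `k(√α)`. -/
theorem stmt15 {k : Type*} [Field k] (h2 : (2 : k) ≠ 0) (α β q : k)
    (hα : ∀ c : k, c ^ 2 ≠ α) (hq : q ^ 2 ≠ 4 * α * β) :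
    Nonempty (RingQuot (CRel k α β q) ≃ₐ[k] Matrix (Fin 2) (Fin 2) k) ↔
      ∃ u v : k, u ^ 2 - α * v ^ 2 = q ^ 2 - 4 * α * β := by
  classical
  have hα0 : α ≠ 0 := fun h => hα 0 (by simpa [h])
  have hn : q ^ 2 - 4 * α * β ≠ 0 := sub_ne_zero.mpr hq
  have hγ0 : α * (4 * α * β - q ^ 2) ≠ 0 := by
    refine mul_ne_zero hα0 (fun h => hn ?_)
    linear_combination -h
  set γ : k := α * (4 * α * β - q ^ 2) with hγdef
  constructor
  · rintro ⟨e⟩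
    set f := RingQuot.mkAlgHom k (CRel k α β q) with hfdef
    set X := e (f (ι k 0)) with hXdef
    set Y := e (f (ι k 1)) with hYdef
    have hXX : X * X = α • (1 : Matrix (Fin 2) (Fin 2) k) := by
      rw [hXdef, ← map_mul, ← map_mul, RingQuot.mkAlgHom_rel k CRel.xx, AlgHom.commutes,
        AlgEquiv.commutes, Algebra.algebraMap_eq_smul_one]
    have hYY : Y * Y = β • (1 : Matrix (Fin 2) (Fin 2) k) := by
      rw [hYdef, ← map_mul, ← map_mul, RingQuot.mkAlgHom_rel k CRel.yy, AlgHom.commutes,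
        AlgEquiv.commutes, Algebra.algebraMap_eq_smul_one]
    have hmix : X * Y + Y * X = q • (1 : Matrix (Fin 2) (Fin 2) k) := by
      rw [hXdef, hYdef, ← map_mul, ← map_mul, ← map_mul, ← map_mul, ← map_add, ← map_add,
        RingQuot.mkAlgHom_rel k CRel.mix, AlgHom.commutes, AlgEquiv.commutes,
        Algebra.algebraMap_eq_smul_one]
    have hYX : Y * X = q • (1 : Matrix (Fin 2) (Fin 2) k) - X * Y := eq_sub_of_add_eq' hmix
    set Z : Matrix (Fin 2) (Fin 2) k := (2 * α) • Y - q • X with hZdef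
    have hZZ : Z * Z = γ • (1 : Matrix (Fin 2) (Fin 2) k) := by
      rw [hZdef, hγdef]
      simp only [sub_mul, mul_sub, smul_mul_assoc, mul_smul_comm, hYY, hXX, hYX, smul_sub,
        smul_smul]
      module
    have hXZ : X * Z = -(Z * X) := by
      have h0 : X * Z + Z * X = 0 := by
        rw [hZdef]
        simp only [sub_mul, mul_sub, smul_mul_assoc, mul_smul_comm, hXX, hYX, smul_sub,
          smul_smul]
        module
      exact eq_neg_of_add_eq_zero_left h0
    have hspan := aux_span h2 hα hγ0 hXX hZZ hXZ
    have hmem : (!![1, 0; 0, 0] : Matrix (Fin 2) (Fin 2) k) ∈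
        Submodule.span k (Set.range ![(1 : Matrix (Fin 2) (Fin 2) k), X, Z, X * Z]) := by
      rw [hspan]; trivial
    rw [Submodule.mem_span_range_iff_exists_fun] at hmem
    obtain ⟨g, hg⟩ := hmem
    rw [Fin.sum_univ_four] at hg
    simp only [Matrix.cons_val_zero, Matrix.cons_val_one, Matrix.head_cons,
      Matrix.cons_val_two, Matrix.tail_cons, Matrix.cons_val_three] at hg
    set a := g 0 with ha'; set b := g 1 with hb'; set c := g 2 with hc'; set d := g 3 with hd'
    set N : k := a ^ 2 - α * b ^ 2 - γ * c ^ 2 + α * γ * d ^ 2 with hNdef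
    have hprod : (!![1, 0; 0, 0] : Matrix (Fin 2) (Fin 2) k) *
        (a • 1 - b • X - c • Z - d • (X * Z)) = N • 1 := by
      rw [← hg]
      exact aux_norm_mul α γ X Z hXX hZZ hXZ a b c d
    have hN : N = 0 := by
      have h0 : (!![0, 0; 0, 1] : Matrix (Fin 2) (Fin 2) k) * !![1, 0; 0, 0] = 0 := by
        rw [Matrix.mul_fin_two]
        ext i j
        fin_cases i <;> fin_cases j <;> simp
      have h1 : N • (!![0, 0; 0, 1] : Matrix (Fin 2) (Fin 2) k) = 0 := by
        calc N • (!![0, 0; 0, 1] : Matrix (Fin 2) (Fin 2) k)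
            = !![0, 0; 0, 1] * (N • (1 : Matrix (Fin 2) (Fin 2) k)) := by
              rw [mul_smul_comm, mul_one]
          _ = !![0, 0; 0, 1] * (!![1, 0; 0, 0] *
              (a • 1 - b • X - c • Z - d • (X * Z))) := by rw [hprod]
          _ = (!![0, 0; 0, 1] * !![1, 0; 0, 0]) *
              (a • 1 - b • X - c • Z - d • (X * Z)) := by rw [mul_assoc]
          _ = 0 := by rw [h0, zero_mul]
      rcases smul_eq_zero.mp h1 with h | h
      · exact h
      · exfalso
        have := congrFun (congrFun h 1) 1
        simp at this
    have hE11 : (!![1, 0; 0, 0] : Matrix (Fin 2) (Fin 2) k) ≠ 0 := by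
      intro h
      have := congrFun (congrFun h 0) 0
      simp at this
    have hcd : c ^ 2 - α * d ^ 2 ≠ 0 := by
      intro h0
      have hd : d = 0 := by
        by_contra hd
        exact hα (c / d) (by field_simp; linear_combination h0)
      have hc : c = 0 := by
        rw [hd] at h0
        have : c ^ 2 = 0 := by linear_combination h0
        exact pow_eq_zero_iff two_ne_zero |>.mp this
      have hab : a ^ 2 - α * b ^ 2 = 0 := by
        rw [hNdef, hc, hd] at hN
        linear_combination hN
      have hb : b = 0 := by
        by_contra hb
        exact hα (a / b) (by field_simp; linear_combination hab)
      have ha : a = 0 := by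
        rw [hb] at hab
        have : a ^ 2 = 0 := by linear_combination hab
        exact pow_eq_zero_iff two_ne_zero |>.mp this
      rw [ha, hb, hc, hd] at hg
      simp only [zero_smul, add_zero, zero_add] at hg
      exact hE11 hg.symm
    -- now produce the norm representation
    have normMul : ∀ s t : k, (∃ u v : k, u ^ 2 - α * v ^ 2 = s) →
        (∃ u v : k, u ^ 2 - α * v ^ 2 = t) → ∃ u v : k, u ^ 2 - α * v ^ 2 = s * t := by
      rintro s t ⟨u1, v1, rfl⟩ ⟨u2, v2, rfl⟩
      exact ⟨u1 * u2 + α * v1 * v2, u1 * v2 + v1 * u2, by ring⟩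
    have normInv : ∀ s : k, s ≠ 0 → (∃ u v : k, u ^ 2 - α * v ^ 2 = s) →
        ∃ u v : k, u ^ 2 - α * v ^ 2 = s⁻¹ := by
      rintro s hs ⟨u1, v1, h⟩
      refine ⟨u1 / s, v1 / s, ?_⟩
      field_simp
      linear_combination h
    have key : ∃ u v : k, u ^ 2 - α * v ^ 2 =
        (-α) * ((α⁻¹) ^ 2 * ((a ^ 2 - α * b ^ 2) * (c ^ 2 - α * d ^ 2)⁻¹)) := by
      apply normMul _ _ ⟨0, 1, by ring⟩
      apply normMul _ _ ⟨α⁻¹, 0, by ring⟩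
      apply normMul _ _ ⟨a, b, rfl⟩
      exact normInv _ hcd ⟨c, d, rfl⟩
    obtain ⟨u, v, huv⟩ := key
    refine ⟨u, v, ?_⟩
    rw [huv, show a ^ 2 - α * b ^ 2 = γ * (c ^ 2 - α * d ^ 2) by
      rw [hγdef] at hNdef ⊢
      linear_combination hN]
    rw [hγdef]
    field_simp
    ring
  · rintro ⟨u, v, huv⟩
    set X : Matrix (Fin 2) (Fin 2) k := !![0, 1; α, 0] with hXdef
    set Z : Matrix (Fin 2) (Fin 2) k := !![α * v, u; -(α * u), -(α * v)] with hZdef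
    have hXX : X * X = α • (1 : Matrix (Fin 2) (Fin 2) k) := by
      rw [hXdef, Matrix.mul_fin_two, Matrix.one_fin_two, Matrix.smul_of]
      ext i j
      fin_cases i <;> fin_cases j <;> simp
    have hZZ : Z * Z = γ • (1 : Matrix (Fin 2) (Fin 2) k) := by
      have h1 : Z * Z = (α ^ 2 * v ^ 2 - α * u ^ 2) • (1 : Matrix (Fin 2) (Fin 2) k) := by
        rw [hZdef, Matrix.mul_fin_two, Matrix.one_fin_two, Matrix.smul_of]
        ext i j
        fin_cases i <;> fin_cases j <;> simp <;> ring
      rw [h1, show α ^ 2 * v ^ 2 - α * u ^ 2 = γ by rw [hγdef]; linear_combination (-α) * huv]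
    have hXZ : X * Z = -(Z * X) := by
      rw [hXdef, hZdef, Matrix.mul_fin_two, Matrix.mul_fin_two]
      ext i j
      fin_cases i <;> fin_cases j <;> simp <;> ring
    set Y : Matrix (Fin 2) (Fin 2) k := (2 * α)⁻¹ • (q • X + Z) with hYdef
    have h2α : (2 * α) ≠ 0 := mul_ne_zero h2 hα0
    have hYY : Y * Y = β • (1 : Matrix (Fin 2) (Fin 2) k) := by
      have h1 : (q • X + Z) * (q • X + Z) = (q ^ 2 * α + γ) • (1 : Matrix (Fin 2) (Fin 2) k) := by
        simp only [add_mul, mul_add, smul_mul_assoc, mul_smul_comm, hXX, hZZ, hXZ, smul_smul,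
          smul_add, smul_neg]
        module
      rw [hYdef, smul_mul_smul_comm, h1, smul_smul,
        show (2 * α)⁻¹ * (2 * α)⁻¹ * (q ^ 2 * α + γ) = β by
          rw [hγdef]; field_simp; ring]
    have hmixM : X * Y + Y * X = q • (1 : Matrix (Fin 2) (Fin 2) k) := by
      have h1 : X * (q • X + Z) + (q • X + Z) * X = ((2 * α) * q) •
          (1 : Matrix (Fin 2) (Fin 2) k) := by
        simp only [add_mul, mul_add, smul_mul_assoc, mul_smul_comm, hXX, hXZ, smul_smul]
        module
      rw [hYdef, mul_smul_comm, smul_mul_assoc, ← smul_add, h1, smul_smul,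
        show (2 * α)⁻¹ * (2 * α * q) = q by field_simp]
    -- the algebra map
    set fr : FreeAlgebra k (Fin 2) →ₐ[k] Matrix (Fin 2) (Fin 2) k :=
      FreeAlgebra.lift k ![X, Y] with hfrdef
    have hfrX : fr (ι k 0) = X := by rw [hfrdef, FreeAlgebra.lift_ι_apply]; rfl
    have hfrY : fr (ι k 1) = Y := by rw [hfrdef, FreeAlgebra.lift_ι_apply]; rfl
    have hrel : ∀ ⦃a b : FreeAlgebra k (Fin 2)⦄, CRel k α β q a b → fr a = fr b := by
      intro a b h
      cases h with
      | xx => rw [map_mul, hfrX, hXX, AlgHom.commutes, Algebra.algebraMap_eq_smul_one]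
      | yy => rw [map_mul, hfrY, hYY, AlgHom.commutes, Algebra.algebraMap_eq_smul_one]
      | mix =>
        rw [map_add, map_mul, map_mul, hfrX, hfrY, hmixM, AlgHom.commutes,
          Algebra.algebraMap_eq_smul_one]
    set F : RingQuot (CRel k α β q) →ₐ[k] Matrix (Fin 2) (Fin 2) k :=
      RingQuot.liftAlgHom k ⟨fr, hrel⟩ with hFdef
    have hFx : F (RingQuot.mkAlgHom k (CRel k α β q) (ι k 0)) = X := by
      rw [hFdef, RingQuot.liftAlgHom_mkAlgHom_apply, hfrX]
    have hFy : F (RingQuot.mkAlgHom k (CRel k α β q) (ι k 1)) = Y := by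
      rw [hFdef, RingQuot.liftAlgHom_mkAlgHom_apply, hfrY]
    -- surjectivity
    have hXr : X ∈ F.range := ⟨_, hFx⟩
    have hYr : Y ∈ F.range := ⟨_, hFy⟩
    have hZr : Z ∈ F.range := by
      have : Z = (2 * α) • Y - q • X := by
        rw [hYdef, smul_smul, mul_inv_cancel₀ h2α, one_smul, add_sub_cancel_left]
      rw [this]
      exact F.range.sub_mem (F.range.smul_mem hYr _) (F.range.smul_mem hXr _)
    have hsurj : Function.Surjective F := by
      intro m
      have hle : Submodule.span k (Set.range ![(1 : Matrix (Fin 2) (Fin 2) k), X, Z, X * Z]) ≤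
          Subalgebra.toSubmodule F.range := by
        rw [Submodule.span_le]
        rintro m' ⟨i, rfl⟩
        fin_cases i
        · exact F.range.one_mem
        · exact hXr
        · exact hZr
        · exact F.range.mul_mem hXr hZr
      have : m ∈ Subalgebra.toSubmodule F.range := by
        apply hle
        rw [aux_span h2 hα hγ0 hXX hZZ hXZ]
        trivial
      exact this
    -- injectivity
    haveI hfin : Module.Finite k (RingQuot (CRel k α β q)) := by
      rw [Module.finite_def, Submodule.fg_def]
      exact ⟨_, Set.finite_range _, crel_span α β q⟩
    have hfr4 : Module.finrank k (RingQuot (CRel k α β q)) ≤ 4 := by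
      have h := finrank_range_le_card (R := k)
        ![(1 : RingQuot (CRel k α β q)),
          RingQuot.mkAlgHom k (CRel k α β q) (ι k 0),
          RingQuot.mkAlgHom k (CRel k α β q) (ι k 1),
          RingQuot.mkAlgHom k (CRel k α β q) (ι k 0) *
            RingQuot.mkAlgHom k (CRel k α β q) (ι k 1)]
      unfold Set.finrank at h
      rw [crel_span α β q, finrank_top] at h
      simpa using h
    have hM4 : Module.finrank k (Matrix (Fin 2) (Fin 2) k) = 4 := by
      simp [Module.finrank_matrix]
    have hrk := LinearMap.finrank_range_add_finrank_ker F.toLinearMap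
    rw [show LinearMap.range F.toLinearMap = ⊤ from LinearMap.range_eq_top.mpr hsurj,
      finrank_top, hM4] at hrk
    have hker : Module.finrank k (LinearMap.ker F.toLinearMap) = 0 := by omega
    have hker' : LinearMap.ker F.toLinearMap = ⊥ := Submodule.finrank_eq_zero.mp hker
    have hinj : Function.Injective F := LinearMap.ker_eq_bot.mp hker'
    exact ⟨AlgEquiv.ofBijective F ⟨hinj, hsurj⟩⟩
end

section
/- Let l = k(√α) with char k ≠ 2, and let l ⊗_k C_{2α} where C_{2α} = k⟨x,y⟩/(x² − α, y² − α, xy + yx − 2α). Then l ⊗_k C_{2α} is isomorphic to lQ_{<2}, the truncated path algebra of the round-trip quiver Q (two vertices u, v with arrows R : u → v and S : v → u) modulo paths of length ≥ 2, via x ↦ √α·u − √α·v + R + S and y ↦ √α·u − √α·v. -/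
set_option maxHeartbeats 1000000

open FreeAlgebra Polynomial TensorProduct

section

variable {k : Type*} [Field k] (α : k)

local notation "Cq" => RingQuot (CRel k α α (2*α))
local notation "Xc" => RingQuot.mkAlgHom k (CRel k α α (2*α)) (ι k 0)
local notation "Yc" => RingQuot.mkAlgHom k (CRel k α α (2*α)) (ι k 1)

lemma cXX : (Xc) * (Xc) = algebraMap k Cq α := by
  rw [← map_mul, RingQuot.mkAlgHom_rel k CRel.xx, AlgHom.commutes]

lemma cYY : (Yc) * (Yc) = algebraMap k Cq α := by
  rw [← map_mul, RingQuot.mkAlgHom_rel k CRel.yy, AlgHom.commutes]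

lemma cYX : (Yc) * (Xc) = algebraMap k Cq (2*α) - (Xc) * (Yc) := by
  rw [eq_sub_iff_add_eq, add_comm, ← map_mul, ← map_mul, ← map_add,
    RingQuot.mkAlgHom_rel k CRel.mix, AlgHom.commutes]

lemma Cspan : Submodule.span k ({1, Xc, Yc, (Xc) * (Yc)} : Set Cq) = ⊤ := by
  set V := Submodule.span k ({1, Xc, Yc, (Xc) * (Yc)} : Set Cq) with hV
  have h1 : (1 : Cq) ∈ V := Submodule.subset_span (by simp)
  have hX : (Xc) ∈ V := Submodule.subset_span (by simp)
  have hY : (Yc) ∈ V := Submodule.subset_span (by simp)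
  have hXY : (Xc) * (Yc) ∈ V := Submodule.subset_span (by simp)
  have halg : ∀ c : k, algebraMap k Cq c ∈ V := fun c => by
    rw [Algebra.algebraMap_eq_smul_one]; exact V.smul_mem c h1
  have com : ∀ (c : k) (z : Cq), z * algebraMap k Cq c = c • z := fun c z => by
    rw [← Algebra.commutes, ← Algebra.smul_def]
  have com' : ∀ (c : k) (z : Cq), algebraMap k Cq c * z = c • z := fun c z =>
    (Algebra.smul_def c z).symm
  have e1 : (Xc) * ((Xc) * (Yc)) = α • (Yc) := by
    rw [← mul_assoc, cXX, com']
  have e2 : (Yc) * ((Xc) * (Yc)) = (2*α) • (Yc) - α • (Xc) := by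
    rw [← mul_assoc, cYX, sub_mul, mul_assoc, cYY, com, com']
  have e3 : ((Xc) * (Yc)) * (Xc) = (2*α) • (Xc) - α • (Yc) := by
    rw [mul_assoc, cYX, mul_sub, com, ← mul_assoc, cXX, com']
  have e4 : ((Xc) * (Yc)) * (Yc) = α • (Xc) := by
    rw [mul_assoc, cYY, com]
  have e5 : ((Xc) * (Yc)) * ((Xc) * (Yc)) = (2*α) • ((Xc)*(Yc)) - (α*α) • (1 : Cq) := by
    rw [← mul_assoc, e3, sub_mul, smul_mul_assoc, smul_mul_assoc, cYY,
      Algebra.algebraMap_eq_smul_one, smul_smul]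
  have hgen : ∀ g ∈ ({1, Xc, Yc, (Xc) * (Yc)} : Set Cq),
      ∀ g' ∈ ({1, Xc, Yc, (Xc) * (Yc)} : Set Cq), g * g' ∈ V := by
    intro g hg g' hg'
    rcases hg with rfl | rfl | rfl | rfl <;> rcases hg' with rfl | rfl | rfl | rfl <;>
      (try simp only [one_mul, mul_one]) <;>
      first
      | assumption
      | (rw [cXX]; exact halg α)
      | (rw [cYY]; exact halg α)
      | (rw [cYX]; exact V.sub_mem (halg _) hXY)
      | (rw [e1]; exact V.smul_mem _ hY)
      | (rw [e2]; exact V.sub_mem (V.smul_mem _ hY) (V.smul_mem _ hX))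
      | (rw [e3]; exact V.sub_mem (V.smul_mem _ hX) (V.smul_mem _ hY))
      | (rw [e4]; exact V.smul_mem _ hX)
      | (rw [e5]; exact V.sub_mem (V.smul_mem _ hXY) (V.smul_mem _ h1))
  have hmul : ∀ p ∈ V, ∀ q ∈ V, p * q ∈ V := by
    intro p hp
    refine Submodule.span_induction (p := fun p _ => ∀ q ∈ V, p * q ∈ V) ?_ ?_ ?_ ?_ hp
    · intro g hg q hq
      refine Submodule.span_induction (p := fun q _ => g * q ∈ V) ?_ ?_ ?_ ?_ hq
      · exact fun g' hg' => hgen g hg g' hg'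
      · simp
      · intro a b _ _ ha hb; rw [mul_add]; exact V.add_mem ha hb
      · intro c a _ ha; rw [mul_smul_comm]; exact V.smul_mem c ha
    · intro q hq; simp
    · intro a b _ _ ha hb q hq; rw [add_mul]; exact V.add_mem (ha q hq) (hb q hq)
    · intro c a _ ha q hq; rw [smul_mul_assoc]; exact V.smul_mem c (ha q hq)
  have hall : ∀ a : FreeAlgebra k (Fin 2), RingQuot.mkAlgHom k (CRel k α α (2*α)) a ∈ V := by
    intro a
    induction a using FreeAlgebra.induction with
    | grade0 c => rw [AlgHom.commutes]; exact halg c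
    | grade1 i =>
      fin_cases i
      · exact hX
      · exact hY
    | mul a b ha hb => rw [map_mul]; exact hmul _ ha _ hb
    | add a b ha hb => rw [map_add]; exact V.add_mem ha hb
  rw [eq_top_iff]
  intro z _
  obtain ⟨a, rfl⟩ := RingQuot.mkAlgHom_surjective k (CRel k α α (2*α)) z
  exact hall a

end

lemma mem_span_quad {R M : Type*} [CommRing R] [AddCommGroup M] [Module R M]
    {w a b c d : M} (h : w ∈ Submodule.span R ({a, b, c, d} : Set M)) :
    ∃ x y z t : R, w = x • a + y • b + z • c + t • d := by
  rw [Submodule.mem_span_insert] at h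
  obtain ⟨x, w1, h1, rfl⟩ := h
  rw [Submodule.mem_span_insert] at h1
  obtain ⟨y, w2, h2, rfl⟩ := h1
  rw [Submodule.mem_span_insert] at h2
  obtain ⟨z, w3, h3, rfl⟩ := h2
  rw [Submodule.mem_span_singleton] at h3
  obtain ⟨t, rfl⟩ := h3
  exact ⟨x, y, z, t, by abel⟩


/-- Let `char k ≠ 2`, `α` a non-square, `l = k(√α)`, and
`C_{2α} = k⟨x,y⟩/(x² − α, y² − α, xy + yx − 2α)`.  Then `l ⊗_k C_{2α}` is isomorphic, as an
`l`-algebra, to the truncated path algebra `lQ_{<2}` of the round-trip quiver — presented here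
by vertex idempotents `u, v` and arrows `R : u → v`, `S : v → u` with all length-two paths zero
and basis `{u, v, R, S}` — via `x ↦ √α·u − √α·v + R + S` and `y ↦ √α·u − √α·v`. -/
theorem stmt18 {k : Type*} [Field k] (h2 : (2 : k) ≠ 0) (α : k) (hα : ∀ c : k, c ^ 2 ≠ α)
    (Y : Type*) [Ring Y] [Algebra (AdjoinRoot (X ^ 2 - C α)) Y]
    (u v R S : Y)
    (huv1 : u + v = 1) (hu : u * u = u) (hv : v * v = v)
    (huv : u * v = 0) (hvu : v * u = 0)
    (hRu : R * u = R) (hvR : v * R = R) (huR : u * R = 0) (hRv : R * v = 0)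
    (hSv : S * v = S) (huS : u * S = S) (hvS : v * S = 0) (hSu : S * u = 0)
    (hRR : R * R = 0) (hSS : S * S = 0) (hRS : R * S = 0) (hSR : S * R = 0)
    (hbasis : ∀ w : Y, ∃! c : AdjoinRoot (X ^ 2 - C α) × AdjoinRoot (X ^ 2 - C α) ×
        AdjoinRoot (X ^ 2 - C α) × AdjoinRoot (X ^ 2 - C α),
        w = c.1 • u + c.2.1 • v + c.2.2.1 • R + c.2.2.2 • S) :
    ∃ e : (AdjoinRoot (X ^ 2 - C α) ⊗[k] RingQuot (CRel k α α (2 * α)))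
        ≃ₐ[AdjoinRoot (X ^ 2 - C α)] Y,
      e (1 ⊗ₜ RingQuot.mkAlgHom k (CRel k α α (2 * α)) (ι k 0)) =
          AdjoinRoot.root (X ^ 2 - C α) • u - AdjoinRoot.root (X ^ 2 - C α) • v + R + S ∧
      e (1 ⊗ₜ RingQuot.mkAlgHom k (CRel k α α (2 * α)) (ι k 1)) =
          AdjoinRoot.root (X ^ 2 - C α) • u - AdjoinRoot.root (X ^ 2 - C α) • v := by
  -- basic setup
  set l := AdjoinRoot (X ^ 2 - C α) with hl
  set r : l := AdjoinRoot.root (X ^ 2 - C α) with hr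
  letI : Algebra k Y := ((algebraMap l Y).comp (algebraMap k l)).toAlgebra'
    (fun c x => Algebra.commutes (algebraMap k l c) x)
  haveI : IsScalarTower k l Y := IsScalarTower.of_algebraMap_eq fun x => rfl
  have hα0 : α ≠ 0 := fun h => hα 0 (by simp [h])
  haveI : Nontrivial l := AdjoinRoot.nontrivial _ (by
    rw [degree_sub_C (by simpa using (by norm_num : (0:ℕ) < 2)), degree_X_pow]; norm_num)
  have hinj : Function.Injective (algebraMap k l) := (algebraMap k l).injective
  have hrr : r * r = algebraMap k l α := by
    have h := AdjoinRoot.eval₂_root (X ^ 2 - C α)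
    rw [eval₂_sub, eval₂_pow, eval₂_X, eval₂_C, sub_eq_zero] at h
    rw [← pow_two, AdjoinRoot.algebraMap_eq]
    exact h
  set α' : l := algebraMap k l α with hα'
  have hα'0 : α' ≠ 0 := fun h => hα0 (hinj (by rw [map_zero]; exact h))
  have hunit2 : IsUnit (2 : l) := by
    rw [← map_ofNat (algebraMap k l) 2]
    exact (isUnit_iff_ne_zero.2 h2).map _
  have hunitα : IsUnit α' := by
    rw [hα']; exact (isUnit_iff_ne_zero.2 hα0).map _
  have h2l : (2 : l) ≠ 0 := hunit2.ne_zero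
  -- the target elements
  set Xh : Y := r • u - r • v + R + S with hXh
  set Yh : Y := r • u - r • v with hYh
  -- multiplication facts in Y
  have hYY2 : Yh * Yh = algebraMap k Y α := by
    rw [hYh, IsScalarTower.algebraMap_apply k l Y, ← hα', Algebra.algebraMap_eq_smul_one,
      ← huv1]
    simp only [mul_sub, sub_mul, mul_add, add_mul, smul_mul_assoc, mul_smul_comm, smul_smul,
      hu, hv, huv, hvu, hRu, hvR, huR, hRv, hSv, huS, hvS, hSu, hRR, hSS, hRS, hSR,
      smul_zero, zero_mul, mul_zero, add_zero, zero_add, sub_zero, zero_sub, neg_smul,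
      smul_neg, neg_neg, hrr, ← hα', smul_add, smul_sub, one_smul]
    module
  have hXX2 : Xh * Xh = algebraMap k Y α := by
    rw [hXh, hYh, IsScalarTower.algebraMap_apply k l Y, ← hα', Algebra.algebraMap_eq_smul_one,
      ← huv1]
    simp only [mul_sub, sub_mul, mul_add, add_mul, smul_mul_assoc, mul_smul_comm, smul_smul,
      hu, hv, huv, hvu, hRu, hvR, huR, hRv, hSv, huS, hvS, hSu, hRR, hSS, hRS, hSR,
      smul_zero, zero_mul, mul_zero, add_zero, zero_add, sub_zero, zero_sub, neg_smul,
      smul_neg, neg_neg, hrr, ← hα', smul_add, smul_sub, one_smul]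
    module
  have hXY2 : Xh * Yh = α' • u + α' • v + r • R - r • S := by
    rw [hXh, hYh]
    simp only [mul_sub, sub_mul, mul_add, add_mul, smul_mul_assoc, mul_smul_comm, smul_smul,
      hu, hv, huv, hvu, hRu, hvR, huR, hRv, hSv, huS, hvS, hSu, hRR, hSS, hRS, hSR,
      smul_zero, zero_mul, mul_zero, add_zero, zero_add, sub_zero, zero_sub, neg_smul,
      smul_neg, neg_neg, hrr, ← hα', smul_add, smul_sub, one_smul]
    module
  have hmix2 : Xh * Yh + Yh * Xh = algebraMap k Y (2 * α) := by
    rw [hXh, hYh, IsScalarTower.algebraMap_apply k l Y, map_mul, map_ofNat, ← hα',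
      Algebra.algebraMap_eq_smul_one, ← huv1]
    simp only [mul_sub, sub_mul, mul_add, add_mul, smul_mul_assoc, mul_smul_comm, smul_smul,
      hu, hv, huv, hvu, hRu, hvR, huR, hRv, hSv, huS, hvS, hSu, hRR, hSS, hRS, hSR,
      smul_zero, zero_mul, mul_zero, add_zero, zero_add, sub_zero, zero_sub, neg_smul,
      smul_neg, neg_neg, hrr, ← hα', smul_add, smul_sub, one_smul]
    module
  -- the forward map
  set f0 : FreeAlgebra k (Fin 2) →ₐ[k] Y := FreeAlgebra.lift k ![Xh, Yh] with hf0
  have hf0X : f0 (ι k 0) = Xh := by rw [hf0, FreeAlgebra.lift_ι_apply]; rfl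
  have hf0Y : f0 (ι k 1) = Yh := by rw [hf0, FreeAlgebra.lift_ι_apply]; rfl
  have hrel : ∀ ⦃x y : FreeAlgebra k (Fin 2)⦄, CRel k α α (2 * α) x y → f0 x = f0 y := by
    intro x y h
    cases h with
    | xx => rw [map_mul, hf0X, hXX2, AlgHom.commutes]
    | yy => rw [map_mul, hf0Y, hYY2, AlgHom.commutes]
    | mix => rw [map_add, map_mul, map_mul, hf0X, hf0Y, hmix2, AlgHom.commutes]
  set g : RingQuot (CRel k α α (2 * α)) →ₐ[k] Y := RingQuot.liftAlgHom k ⟨f0, hrel⟩ with hg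
  have hgX : g (RingQuot.mkAlgHom k (CRel k α α (2 * α)) (ι k 0)) = Xh := by
    rw [hg, RingQuot.liftAlgHom_mkAlgHom_apply, hf0X]
  have hgY : g (RingQuot.mkAlgHom k (CRel k α α (2 * α)) (ι k 1)) = Yh := by
    rw [hg, RingQuot.liftAlgHom_mkAlgHom_apply, hf0Y]
  set φ : l ⊗[k] RingQuot (CRel k α α (2 * α)) →ₐ[l] Y :=
    Algebra.TensorProduct.lift (Algebra.ofId l Y) g
      (fun x y => show Commute _ _ from (Algebra.commutes x (g y))) with hφ
  have hφ1 : ∀ c, φ (1 ⊗ₜ c) = g c := by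
    intro c
    rw [hφ, Algebra.TensorProduct.lift_tmul, map_one, one_mul]
  -- surjectivity
  set rinv : l := algebraMap k l α⁻¹ * r with hrinv
  have hrinvr : rinv * r = 1 := by
    rw [hrinv, mul_assoc, hrr, ← map_mul, inv_mul_cancel₀ hα0, map_one]
  set half : l := algebraMap k l 2⁻¹ with hhalf
  have hYmem : Yh ∈ φ.range := by
    have h : φ (1 ⊗ₜ RingQuot.mkAlgHom k (CRel k α α (2 * α)) (ι k 1)) = Yh := by
      rw [hφ1, hgY]
    exact ⟨_, h⟩
  have hXmem : Xh ∈ φ.range := by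
    have h : φ (1 ⊗ₜ RingQuot.mkAlgHom k (CRel k α α (2 * α)) (ι k 0)) = Xh := by
      rw [hφ1, hgX]
    exact ⟨_, h⟩
  have hueq : u = half • ((1 : Y) + rinv • Yh) := by
    rw [hYh, smul_sub, smul_smul, smul_smul, hrinvr, one_smul, one_smul, ← huv1]
    rw [show u + v + (u - v) = u + u by abel, ← two_smul l u, smul_smul, hhalf]
    rw [show (2 : l) = algebraMap k l 2 from (map_ofNat _ 2).symm, ← map_mul,
      inv_mul_cancel₀ h2, map_one, one_smul]
  have humem : u ∈ φ.range := by
    rw [hueq]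
    exact Subalgebra.smul_mem _ (add_mem (one_mem _) (Subalgebra.smul_mem _ hYmem _)) _
  have hvmem : v ∈ φ.range := by
    have h : v = 1 - u := by rw [← huv1]; abel
    rw [h]; exact sub_mem (one_mem _) humem
  have hRSmem : R + S ∈ φ.range := by
    have h : R + S = Xh - Yh := by rw [hXh, hYh]; abel
    rw [h]; exact sub_mem hXmem hYmem
  have hRmem : R ∈ φ.range := by
    have h : R = v * (R + S) := by rw [mul_add, hvR, hvS, add_zero]
    rw [h]; exact mul_mem hvmem hRSmem
  have hSmem : S ∈ φ.range := by
    have h : S = u * (R + S) := by rw [mul_add, huR, huS, zero_add]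
    rw [h]; exact mul_mem humem hRSmem
  have hsurj : Function.Surjective φ := by
    intro w
    obtain ⟨c, hc, -⟩ := hbasis w
    have h : w ∈ φ.range := by
      rw [hc]
      exact add_mem (add_mem (add_mem (Subalgebra.smul_mem _ humem _)
        (Subalgebra.smul_mem _ hvmem _)) (Subalgebra.smul_mem _ hRmem _))
        (Subalgebra.smul_mem _ hSmem _)
    exact h
  -- injectivity
  have hinj2 : Function.Injective φ := by
    rw [injective_iff_map_eq_zero]
    intro z hz
    set Xc := RingQuot.mkAlgHom k (CRel k α α (2 * α)) (ι k 0) with hXc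
    set Yc := RingQuot.mkAlgHom k (CRel k α α (2 * α)) (ι k 1) with hYc
    have hspan : ∀ w : l ⊗[k] RingQuot (CRel k α α (2 * α)), w ∈ Submodule.span l
        ({1 ⊗ₜ 1, 1 ⊗ₜ Xc, 1 ⊗ₜ Yc, 1 ⊗ₜ (Xc * Yc)} :
          Set (l ⊗[k] RingQuot (CRel k α α (2 * α)))) := by
      intro w
      induction w using TensorProduct.induction_on with
      | zero => exact zero_mem _
      | add a b ha hb => exact add_mem ha hb
      | tmul a c =>
        have hc : c ∈ Submodule.span k ({1, Xc, Yc, Xc * Yc} :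
            Set (RingQuot (CRel k α α (2 * α)))) := by
          rw [hXc, hYc, Cspan]; trivial
        refine Submodule.span_induction
          (p := fun c _ => a ⊗ₜ[k] c ∈ Submodule.span l
            ({1 ⊗ₜ 1, 1 ⊗ₜ Xc, 1 ⊗ₜ Yc, 1 ⊗ₜ (Xc * Yc)} :
              Set (l ⊗[k] RingQuot (CRel k α α (2 * α))))) ?_ ?_ ?_ ?_ hc
        · intro g hg
          have h : a ⊗ₜ[k] g = a • ((1 : l) ⊗ₜ[k] g) := by
            rw [TensorProduct.smul_tmul', smul_eq_mul, mul_one]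
          rw [h]
          refine Submodule.smul_mem _ _ (Submodule.subset_span ?_)
          rcases hg with rfl | rfl | rfl | rfl
          · exact Or.inl rfl
          · exact Or.inr (Or.inl rfl)
          · exact Or.inr (Or.inr (Or.inl rfl))
          · exact Or.inr (Or.inr (Or.inr rfl))
        · show a ⊗ₜ[k] (0 : RingQuot (CRel k α α (2 * α))) ∈ _
          rw [TensorProduct.tmul_zero]; exact zero_mem _
        · intro c d _ _ hcm hdm; rw [TensorProduct.tmul_add]; exact add_mem hcm hdm
        · intro t c _ hcm
          rw [TensorProduct.tmul_smul]
          exact Submodule.smul_of_tower_mem _ t hcm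
    obtain ⟨x, y, z', t, hrep⟩ := mem_span_quad (hspan z)
    have hφXY : φ (1 ⊗ₜ (Xc * Yc)) = α' • u + α' • v + r • R - r • S := by
      rw [hφ1, map_mul, hgX, hgY, hXY2]
    have h10 : φ ((1 : l) ⊗ₜ (1 : RingQuot (CRel k α α (2 * α)))) = 1 := by
      rw [hφ1, map_one]
    have hz0 : (0 : Y) = (x + r * y + r * z' + α' * t) • u
        + (x - r * y - r * z' + α' * t) • v + (y + r * t) • R + (y - r * t) • S := by
      rw [← hz, hrep, map_add, map_add, map_add, map_smul, map_smul, map_smul, map_smul,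
        h10, hφ1, hφ1, hgX, hgY, hφXY, hXh, hYh, ← huv1]
      simp only [smul_add, smul_sub, smul_smul]
      module
    obtain ⟨c₀, -, huniq⟩ := hbasis (0 : Y)
    have heq := (huniq (x + r * y + r * z' + α' * t, x - r * y - r * z' + α' * t,
        y + r * t, y - r * t) hz0).trans (huniq (0, 0, 0, 0) (by simp)).symm
    simp only [Prod.mk.injEq] at heq
    obtain ⟨e1, e2, e3, e4⟩ := heq
    have hy : y = 0 := by
      have h : (2 : l) * y = 0 := by linear_combination e3 + e4
      exact (hunit2.mul_right_eq_zero).mp h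
    have hrt : r * t = 0 := by
      have h : (2 : l) * (r * t) = 0 := by linear_combination e3 - e4
      exact (hunit2.mul_right_eq_zero).mp h
    have ht : t = 0 := by
      have h : α' * t = 0 := by rw [← hrr, mul_assoc, hrt, mul_zero]
      exact (hunitα.mul_right_eq_zero).mp h
    have hx : x = 0 := by
      have h : (2 : l) * x = 0 := by linear_combination e1 + e2 - α' * ht - α' * ht
      exact (hunit2.mul_right_eq_zero).mp h
    have hrz : r * z' = 0 := by
      have h : (2 : l) * (r * z') = 0 := by linear_combination e1 - e2 - 2 * r * hy
      exact (hunit2.mul_right_eq_zero).mp h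
    have hz' : z' = 0 := by
      have h : α' * z' = 0 := by rw [← hrr, mul_assoc, hrz, mul_zero]
      exact (hunitα.mul_right_eq_zero).mp h
    rw [hrep, hx, hy, hz', ht]
    simp
  refine ⟨AlgEquiv.ofBijective φ ⟨hinj2, hsurj⟩, ?_, ?_⟩
  · exact (hφ1 _).trans hgX
  · exact (hφ1 _).trans hgY
end
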